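/- arXiv:0903.4475 — 6 statements merged into one kernel-verified Lean document; each statement's English description precedes it below -/
import Mathlib

section
/- Let μ be a Borel probability measure on I = [0,∞] (the one-point compactification of [0,∞)), let T > 0 and set p = μ[0,T). Assume 0 < p < 1 and p < α < 1. Then inf{ H(ν|μ) : ν a Borel probability measure on I with ν[0,T) ≥ α } = ħ(α,p), and the infimum is attained at the tilted measure μ*_α, i.e. ħ(α,p) = H(μ*_α|μ). -/
open MeasureTheory Filter Set
open scoped ENNReal NNReal Classical

noncomputable section


/-- `ħ(a,b)`: binary relative entropy (with the convention `Real.log 0 = 0`,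
so that `0 · ln 0 = 0`). -/
def hbar (a b : ℝ) : ℝ := a * Real.log (a / b) + (1 - a) * Real.log ((1 - a) / (1 - b))

/-- Relative entropy `H(ν|μ)` of Borel probability measures on `I = [0,∞]`
(realized as `ℝ≥0∞`): `∫ ln (dν/dμ) dν` if `ν ≪ μ` (the value being `∞` if the
integral diverges), and `∞` otherwise. -/
def relEntropy (ν μ : Measure ℝ≥0∞) : ℝ≥0∞ :=
  if ν ≪ μ ∧ Integrable (fun t => Real.log ((ν.rnDeriv μ t).toReal)) ν then
    ENNReal.ofReal (∫ t, Real.log ((ν.rnDeriv μ t).toReal) ∂ν)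
  else ⊤

/-- The tilted measure `μ*_a`:
`μ*_a(A) = (a/p)·μ(A ∩ [0,T)) + ((1−a)/(1−p))·μ(A ∩ [T,∞])`. -/
def tiltedMu (μ : Measure ℝ≥0∞) (T a p : ℝ) : Measure ℝ≥0∞ :=
  ENNReal.ofReal (a / p) • μ.restrict (Set.Iio (ENNReal.ofReal T)) +
    ENNReal.ofReal ((1 - a) / (1 - p)) • μ.restrict (Set.Ici (ENNReal.ofReal T))

instance tiltedMu.instIsFiniteMeasure (μ : Measure ℝ≥0∞) [IsFiniteMeasure μ] (T a p : ℝ) :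
    IsFiniteMeasure (tiltedMu μ T a p) := by
  constructor
  rw [tiltedMu]
  simp only [Measure.add_apply, Measure.smul_apply, smul_eq_mul]
  exact ENNReal.add_lt_top.mpr ⟨ENNReal.mul_lt_top ENNReal.ofReal_lt_top (measure_lt_top _ _),
    ENNReal.mul_lt_top ENNReal.ofReal_lt_top (measure_lt_top _ _)⟩

lemma mul_log_div_le {x c : ℝ} (hx : 0 ≤ x) (hc : 0 < c) : x * Real.log (c / x) ≤ c - x := by
  rcases eq_or_lt_of_le hx with h | h
  · simp [← h, hc.le]
  · have hcx : 0 < c / x := div_pos hc h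
    have := Real.log_le_sub_one_of_pos hcx
    calc x * Real.log (c / x) ≤ x * (c / x - 1) := by nlinarith
      _ = c - x := by field_simp
lemma hbar_nonneg {a b : ℝ} (ha0 : 0 ≤ a) (ha1 : a ≤ 1) (hb0 : 0 < b) (hb1 : b < 1) :
    0 ≤ hbar a b := by
  have h1 : a * Real.log (b / a) ≤ b - a := mul_log_div_le ha0 hb0
  have h2 : (1 - a) * Real.log ((1 - b) / (1 - a)) ≤ (1 - b) - (1 - a) :=
    mul_log_div_le (by linarith) (by linarith)
  have e1 : Real.log (a / b) = - Real.log (b / a) := by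
    rcases eq_or_lt_of_le ha0 with h | h
    · simp [← h]
    · rw [← Real.log_inv]; congr 1; field_simp
  have e2 : Real.log ((1 - a) / (1 - b)) = - Real.log ((1 - b) / (1 - a)) := by
    rcases eq_or_lt_of_le ha1 with h | h
    · simp [h.symm]
    · rw [← Real.log_inv]; congr 1; rw [inv_div]
  rw [hbar, e1, e2]; nlinarith

lemma hbar_mono {p α a : ℝ} (hp0 : 0 < p) (hp1 : p < 1) (hpα : p < α) (hα1 : α < 1)
    (hαa : α ≤ a) (ha1 : a ≤ 1) : hbar α p ≤ hbar a p := by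
  have hα0 : 0 < α := hp0.trans hpα
  have ha0 : 0 < a := hα0.trans_le hαa
  have key : hbar a p = hbar a α + a * Real.log (α / p) + (1 - a) * Real.log ((1 - α) / (1 - p)) := by
    have e1 : Real.log (a / p) = Real.log (a / α) + Real.log (α / p) := by
      have h : a / p = a / α * (α / p) := by field_simp
      rw [h, Real.log_mul (by positivity) (by positivity)]
    rcases eq_or_lt_of_le ha1 with h | h
    · rw [hbar, hbar, e1, h]; ring
    · have e2 : Real.log ((1 - a) / (1 - p)) =
          Real.log ((1 - a) / (1 - α)) + Real.log ((1 - α) / (1 - p)) := by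
        have hh : (1 - a) / (1 - p) = (1 - a) / (1 - α) * ((1 - α) / (1 - p)) := by
          rw [div_mul_div_comm]; rw [mul_comm (1-α) (1-p)] ; rw [mul_div_mul_right _ _ (by linarith : (1:ℝ) - α ≠ 0)]
        rw [hh, Real.log_mul (div_pos (by linarith) (by linarith)).ne'
          (div_pos (by linarith) (by linarith)).ne']
      rw [hbar, hbar, e1, e2]; ring
  have hnn : 0 ≤ hbar a α := hbar_nonneg ha0.le ha1 hα0 hα1
  have hl1 : 0 ≤ Real.log (α / p) := Real.log_nonneg (by rw [le_div_iff₀ hp0]; linarith)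
  have hl2 : Real.log ((1 - α) / (1 - p)) ≤ 0 :=
    Real.log_nonpos (div_nonneg (by linarith) (by linarith)) (by rw [div_le_one (by linarith)]; linarith)
  have expand : hbar α p = α * Real.log (α / p) + (1 - α) * Real.log ((1 - α) / (1 - p)) := rfl
  rw [key, expand]
  nlinarith [mul_nonneg (sub_nonneg.mpr hαa) hl1, mul_nonpos_of_nonneg_of_nonpos (by linarith : (0:ℝ) ≤ α - a + (a - α)) hl2]

lemma setIntegral_llr_ge (ν μ : Measure ℝ≥0∞) [IsFiniteMeasure ν] [IsFiniteMeasure μ]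
    (hac : ν ≪ μ) (hint : Integrable (llr ν μ) ν) {A : Set ℝ≥0∞} (hA : MeasurableSet A) :
    (ν A).toReal * Real.log ((ν A).toReal / (μ A).toReal) ≤ ∫ x in A, llr ν μ x ∂ν := by
  by_cases hν : ν A = 0
  · rw [Measure.restrict_eq_zero.mpr hν, integral_zero_measure]
    simp [hν]
  · set c : ℝ := (ν A).toReal with hc
    have hc0 : 0 < c := ENNReal.toReal_pos hν (measure_ne_top _ _)
    have hNZ : NeZero (ν.restrict A) := ⟨fun h => hν (Measure.restrict_eq_zero.mp h)⟩
    have huniv : ν.restrict A Set.univ = ν A := by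
      rw [Measure.restrict_apply_univ]
    -- the exp(-llr) function
    have h_eq : (fun x => Real.exp (- llr ν μ x)) =ᵐ[ν] fun x => (μ.rnDeriv ν x).toReal :=
      exp_neg_llr hac
    have h_eqA : (fun x => Real.exp (- llr ν μ x)) =ᵐ[ν.restrict A]
        fun x => (μ.rnDeriv ν x).toReal := ae_restrict_of_ae h_eq
    have hlint : ∫⁻ x in A, μ.rnDeriv ν x ∂ν ≤ μ A := Measure.setLIntegral_rnDeriv_le A
    have hint_rn : Integrable (fun x => (μ.rnDeriv ν x).toReal) (ν.restrict A) := by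
      refine integrable_toReal_of_lintegral_ne_top
        (Measure.measurable_rnDeriv μ ν).aemeasurable ?_
      exact (hlint.trans_lt (measure_lt_top μ A)).ne
    have hint_exp : Integrable (fun x => Real.exp (- llr ν μ x)) (ν.restrict A) :=
      hint_rn.congr h_eqA.symm
    have hint_f : Integrable (fun x => - llr ν μ x) (ν.restrict A) := hint.restrict.neg
    -- Jensen
    have hjen := convexOn_exp.map_average_le Real.continuous_exp.continuousOn isClosed_univ
      (Filter.Eventually.of_forall fun _ => Set.mem_univ _) hint_f (μ := ν.restrict A)
      (by exact hint_exp)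
    -- compute the average of exp(-llr)
    have havg_exp : ⨍ x, Real.exp (- llr ν μ x) ∂(ν.restrict A) ≤ c⁻¹ * (μ A).toReal := by
      rw [average_eq, measureReal_def, huniv]
      have h1 : ∫ x, Real.exp (- llr ν μ x) ∂(ν.restrict A)
          = ∫ x, (μ.rnDeriv ν x).toReal ∂(ν.restrict A) := integral_congr_ae h_eqA
      have h2 : ∫ x, (μ.rnDeriv ν x).toReal ∂(ν.restrict A)
          = (∫⁻ x in A, μ.rnDeriv ν x ∂ν).toReal := by
        rw [integral_toReal (Measure.measurable_rnDeriv μ ν).aemeasurable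
          (ae_restrict_of_ae (Measure.rnDeriv_lt_top μ ν))]
      have h3 : (∫⁻ x in A, μ.rnDeriv ν x ∂ν).toReal ≤ (μ A).toReal :=
        ENNReal.toReal_mono (measure_ne_top μ A) hlint
      have := (h1.trans h2).trans_le h3
      rw [smul_eq_mul]
      exact mul_le_mul_of_nonneg_left this (by positivity)
    have hle : Real.exp (⨍ x, - llr ν μ x ∂(ν.restrict A)) ≤ c⁻¹ * (μ A).toReal :=
      hjen.trans havg_exp
    have hC : 0 < c⁻¹ * (μ A).toReal := lt_of_lt_of_le (Real.exp_pos _) hle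
    have hm : 0 < (μ A).toReal := by
      by_contra h
      push_neg at h
      nlinarith [inv_pos.mpr hc0]
    have hlog : ⨍ x, - llr ν μ x ∂(ν.restrict A) ≤ Real.log (c⁻¹ * (μ A).toReal) :=
      (Real.le_log_iff_exp_le hC).mpr hle
    have havg : ⨍ x, - llr ν μ x ∂(ν.restrict A) = c⁻¹ * (- ∫ x in A, llr ν μ x ∂ν) := by
      rw [average_eq, measureReal_def, huniv, integral_neg, smul_eq_mul]
    rw [havg] at hlog
    have hlogeq : Real.log (c⁻¹ * (μ A).toReal) = - Real.log (c / (μ A).toReal) := by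
      rw [← Real.log_inv]
      congr 1
      field_simp
    rw [hlogeq] at hlog
    -- multiply by c
    have := mul_le_mul_of_nonneg_left hlog hc0.le
    rw [← mul_assoc, mul_inv_cancel₀ hc0.ne', one_mul] at this
    linarith

section tilted

variable (μ : Measure ℝ≥0∞) [IsProbabilityMeasure μ] (T p α : ℝ)

/-- the density of the tilted measure -/
def tiltedDens (T a p : ℝ) : ℝ≥0∞ → ℝ≥0∞ :=
  (Set.Iio (ENNReal.ofReal T)).indicator (fun _ => ENNReal.ofReal (a / p)) +
    (Set.Iio (ENNReal.ofReal T))ᶜ.indicator (fun _ => ENNReal.ofReal ((1 - a) / (1 - p)))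

lemma tiltedDens_measurable : Measurable (tiltedDens T α p) :=
  ((measurable_const.indicator measurableSet_Iio).add
    (measurable_const.indicator measurableSet_Iio.compl))

lemma tiltedMu_eq_withDensity : tiltedMu μ T α p = μ.withDensity (tiltedDens T α p) := by
  rw [tiltedDens, withDensity_add_left (measurable_const.indicator measurableSet_Iio),
    withDensity_indicator measurableSet_Iio, withDensity_indicator measurableSet_Iio.compl,
    withDensity_const, withDensity_const, tiltedMu, compl_Iio]

lemma tiltedMu_ac : tiltedMu μ T α p ≪ μ := by
  rw [tiltedMu_eq_withDensity]
  exact withDensity_absolutelyContinuous μ _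

lemma tiltedMu_apply_Iio (hpμ : μ (Set.Iio (ENNReal.ofReal T)) = ENNReal.ofReal p)
    (hp0 : 0 < p) (hα0 : 0 ≤ α) :
    tiltedMu μ T α p (Set.Iio (ENNReal.ofReal T)) = ENNReal.ofReal α := by
  rw [tiltedMu, Measure.add_apply, Measure.smul_apply, Measure.smul_apply,
    Measure.restrict_apply measurableSet_Iio, Measure.restrict_apply measurableSet_Iio,
    Set.inter_self, Set.Iio_inter_Ici, Set.Ico_self, measure_empty, smul_zero, add_zero,
    hpμ, smul_eq_mul, ← ENNReal.ofReal_mul (by positivity), div_mul_cancel₀ _ hp0.ne']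

lemma tiltedMu_apply_Ici (hpμ : μ (Set.Iio (ENNReal.ofReal T)) = ENNReal.ofReal p)
    (hp0 : 0 < p) (hp1 : p < 1) (hα0 : 0 ≤ α) (hα1 : α ≤ 1) :
    tiltedMu μ T α p (Set.Ici (ENNReal.ofReal T)) = ENNReal.ofReal (1 - α) := by
  have hμIci : μ (Set.Ici (ENNReal.ofReal T)) = ENNReal.ofReal (1 - p) := by
    have := measure_compl (μ := μ) (s := Set.Iio (ENNReal.ofReal T)) measurableSet_Iio (measure_ne_top _ _)
    rw [compl_Iio] at this
    rw [this, hpμ, measure_univ, ← ENNReal.ofReal_one, ← ENNReal.ofReal_sub _ hp0.le]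
  rw [tiltedMu, Measure.add_apply, Measure.smul_apply, Measure.smul_apply,
    Measure.restrict_apply measurableSet_Ici, Measure.restrict_apply measurableSet_Ici,
    Set.Ici_inter_Iio, Set.Ico_self, measure_empty, smul_zero, zero_add,
    Set.inter_self, hμIci, smul_eq_mul, ← ENNReal.ofReal_mul (div_nonneg (by linarith) (by linarith)),
    div_mul_cancel₀ _ (by linarith : (1:ℝ) - p ≠ 0)]

lemma tiltedMu_isProbability (hpμ : μ (Set.Iio (ENNReal.ofReal T)) = ENNReal.ofReal p)
    (hp0 : 0 < p) (hp1 : p < 1) (hα0 : 0 ≤ α) (hα1 : α ≤ 1) :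
    IsProbabilityMeasure (tiltedMu μ T α p) := by
  constructor
  have : (Set.univ : Set ℝ≥0∞) = Set.Iio (ENNReal.ofReal T) ∪ Set.Ici (ENNReal.ofReal T) := by
    rw [Set.Iio_union_Ici]
  rw [this, measure_union (Set.Iio_disjoint_Ici le_rfl) measurableSet_Ici,
    tiltedMu_apply_Iio μ T p α hpμ hp0 hα0, tiltedMu_apply_Ici μ T p α hpμ hp0 hp1 hα0 hα1,
    ← ENNReal.ofReal_add hα0 (by linarith), add_sub_cancel, ENNReal.ofReal_one]

lemma relEntropy_tiltedMu (hpμ : μ (Set.Iio (ENNReal.ofReal T)) = ENNReal.ofReal p)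
    (hp0 : 0 < p) (hp1 : p < 1) (hpα : p < α) (hα1 : α < 1) :
    relEntropy (tiltedMu μ T α p) μ = ENNReal.ofReal (hbar α p) := by
  set A := Set.Iio (ENNReal.ofReal T) with hA
  set ν := tiltedMu μ T α p with hν
  have hα0 : 0 < α := hp0.trans hpα
  have hac : ν ≪ μ := tiltedMu_ac μ T p α
  have hrn : ν.rnDeriv μ =ᵐ[μ] tiltedDens T α p := by
    rw [hν, tiltedMu_eq_withDensity]
    exact Measure.rnDeriv_withDensity μ (tiltedDens_measurable T p α)
  have hrnν : ν.rnDeriv μ =ᵐ[ν] tiltedDens T α p := hac.ae_le hrn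
  -- the log of the density as indicator sum
  set L₁ : ℝ := Real.log (α / p) with hL₁
  set L₂ : ℝ := Real.log ((1 - α) / (1 - p)) with hL₂
  have hdens_log : ∀ x, Real.log ((tiltedDens T α p x).toReal)
      = A.indicator (fun _ => L₁) x + Aᶜ.indicator (fun _ => L₂) x := by
    intro x
    by_cases hx : x ∈ A
    · simp only [tiltedDens, Pi.add_apply, ← hA, Set.indicator_of_mem hx,
        Set.indicator_of_notMem (by simp [hx] : x ∉ Aᶜ), add_zero,
        ENNReal.toReal_ofReal (div_nonneg hα0.le hp0.le : (0:ℝ) ≤ α / p), ← hL₁]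
    · simp only [tiltedDens, Pi.add_apply, ← hA, Set.indicator_of_notMem hx,
        Set.indicator_of_mem (Set.mem_compl hx), zero_add,
        ENNReal.toReal_ofReal (div_nonneg (by linarith) (by linarith) : (0:ℝ) ≤ (1 - α) / (1 - p)), ← hL₂]
  set F : ℝ≥0∞ → ℝ := fun x => A.indicator (fun _ => L₁) x + Aᶜ.indicator (fun _ => L₂) x with hF
  have hAm : MeasurableSet A := measurableSet_Iio
  have hintF : Integrable F ν :=
    ((integrable_const L₁).indicator hAm).add ((integrable_const L₂).indicator hAm.compl)
  have h_ae : (fun t => Real.log ((ν.rnDeriv μ t).toReal)) =ᵐ[ν] F := by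
    filter_upwards [hrnν] with x hx
    rw [hx, hF]
    exact hdens_log x
  have hint : Integrable (fun t => Real.log ((ν.rnDeriv μ t).toReal)) ν := hintF.congr h_ae.symm
  have hνA : ν A = ENNReal.ofReal α := tiltedMu_apply_Iio μ T p α hpμ hp0 hα0.le
  have hνAc : ν Aᶜ = ENNReal.ofReal (1 - α) := by
    rw [hA, compl_Iio]
    exact tiltedMu_apply_Ici μ T p α hpμ hp0 hp1 hα0.le hα1.le
  have hIntF : ∫ x, F x ∂ν = hbar α p := by
    rw [hF]
    rw [integral_add ((integrable_const L₁).indicator hAm) ((integrable_const L₂).indicator hAm.compl),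
      integral_indicator_const L₁ hAm, integral_indicator_const L₂ hAm.compl,
      measureReal_def, measureReal_def, hνA, hνAc, ENNReal.toReal_ofReal hα0.le, ENNReal.toReal_ofReal (by linarith)]
    simp only [smul_eq_mul, hbar, hL₁, hL₂]
  rw [relEntropy, if_pos ⟨hac, hint⟩, integral_congr_ae h_ae, hIntF]

end tilted


theorem stmt0 (μ : Measure ℝ≥0∞) [IsProbabilityMeasure μ] (T p α : ℝ)
    (hT : 0 < T) (hpμ : μ (Set.Iio (ENNReal.ofReal T)) = ENNReal.ofReal p)
    (hp0 : 0 < p) (hp1 : p < 1) (hpα : p < α) (hα1 : α < 1) :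
    sInf {x : ℝ≥0∞ | ∃ ν : Measure ℝ≥0∞, IsProbabilityMeasure ν ∧
        ENNReal.ofReal α ≤ ν (Set.Iio (ENNReal.ofReal T)) ∧ x = relEntropy ν μ}
      = ENNReal.ofReal (hbar α p) ∧
    relEntropy (tiltedMu μ T α p) μ = ENNReal.ofReal (hbar α p) := by
  have hα0 : 0 < α := hp0.trans hpα
  have hprob : IsProbabilityMeasure (tiltedMu μ T α p) :=
    tiltedMu_isProbability μ T p α hpμ hp0 hp1 hα0.le hα1.le
  have hval : relEntropy (tiltedMu μ T α p) μ = ENNReal.ofReal (hbar α p) :=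
    relEntropy_tiltedMu μ T p α hpμ hp0 hp1 hpα hα1
  refine ⟨le_antisymm ?_ ?_, hval⟩
  · exact sInf_le ⟨tiltedMu μ T α p, hprob,
      (tiltedMu_apply_Iio μ T p α hpμ hp0 hα0.le).ge, hval.symm⟩
  · refine le_sInf ?_
    rintro x ⟨ν, hνprob, hνA, rfl⟩
    rw [relEntropy]
    split_ifs with h
    · obtain ⟨hac, hint⟩ := h
      refine ENNReal.ofReal_le_ofReal ?_
      set A := Set.Iio (ENNReal.ofReal T) with hAdef
      have hAm : MeasurableSet A := measurableSet_Iio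
      have hllr : (fun t => Real.log ((ν.rnDeriv μ t).toReal)) = llr ν μ := rfl
      rw [hllr] at hint ⊢
      have hsplit : ∫ t, llr ν μ t ∂ν = ∫ t in A, llr ν μ t ∂ν + ∫ t in Aᶜ, llr ν μ t ∂ν :=
        (integral_add_compl hAm hint).symm
      set a : ℝ := (ν A).toReal with ha
      have hνA1 : ν A ≤ 1 := prob_le_one
      have haα : α ≤ a := by
        have := ENNReal.toReal_mono (measure_ne_top ν A) hνA
        rwa [ENNReal.toReal_ofReal hα0.le] at this
      have ha1 : a ≤ 1 := by
        have := ENNReal.toReal_mono ENNReal.one_ne_top hνA1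
        rwa [ENNReal.toReal_one] at this
      have hμA : (μ A).toReal = p := by rw [hpμ, ENNReal.toReal_ofReal hp0.le]
      have hνAc : (ν Aᶜ).toReal = 1 - a := by
        rw [measure_compl hAm (measure_ne_top _ _), measure_univ,
          ENNReal.toReal_sub_of_le hνA1 ENNReal.one_ne_top, ENNReal.toReal_one]
      have hμAc : (μ Aᶜ).toReal = 1 - p := by
        rw [measure_compl hAm (measure_ne_top _ _), measure_univ, hpμ,
          ENNReal.toReal_sub_of_le (ENNReal.ofReal_le_one.mpr hp1.le) ENNReal.one_ne_top,
          ENNReal.toReal_one, ENNReal.toReal_ofReal hp0.le]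
      have k1 := setIntegral_llr_ge ν μ hac hint hAm
      have k2 := setIntegral_llr_ge ν μ hac hint hAm.compl
      rw [hμA, ← ha] at k1
      rw [hμAc, hνAc] at k2
      have hmono : hbar α p ≤ hbar a p := hbar_mono hp0 hp1 hpα hα1 haα ha1
      have : hbar a p ≤ ∫ t, llr ν μ t ∂ν := by
        rw [hsplit, hbar]
        exact add_le_add k1 k2
      linarith
    · exact le_top

end
end

section
/- Let μ be a Borel probability measure on I = [0,∞], let T > 0 and set p = μ[0,T); assume 0 < p < 1. Then for every α' ∈ [0,1], inf{ H(ν|μ) : ν a Borel probability measure on I with ν[0,T) = α' } = ħ(α',p), and the infimum is attained at the tilted measure μ*_{α'}, i.e. ħ(α',p) = H(μ*_{α'}|μ). -/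
open MeasureTheory Filter Set
open scoped ENNReal NNReal Classical

noncomputable section

/-! ### Auxiliary lemmas -/

lemma meas_compl_ofReal (ν : Measure ℝ≥0∞) [IsProbabilityMeasure ν] {s : Set ℝ≥0∞}
    (hs : MeasurableSet s) {c : ℝ} (hc0 : 0 ≤ c) (h : ν s = ENNReal.ofReal c) :
    ν sᶜ = ENNReal.ofReal (1 - c) := by
  rw [measure_compl hs (measure_ne_top ν s), measure_univ, h,
    ENNReal.ofReal_sub _ hc0, ENNReal.ofReal_one]

/-- Key set-integral lower bound: `∫_A log(dν/dμ) dν ≥ ν(A) log(ν(A)/μ(A))`. -/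
lemma setIntegral_log_rnDeriv_ge (ν μ : Measure ℝ≥0∞) [IsFiniteMeasure ν] [IsFiniteMeasure μ]
    (hac : ν ≪ μ)
    (hint : Integrable (fun t => Real.log ((ν.rnDeriv μ t).toReal)) ν)
    {A : Set ℝ≥0∞} (hA : MeasurableSet A) (hνA : ν A ≠ 0) :
    (ν A).toReal * Real.log ((ν A).toReal / (μ A).toReal)
      ≤ ∫ t in A, Real.log ((ν.rnDeriv μ t).toReal) ∂ν := by
  set f := ν.rnDeriv μ with hfdef
  have hfm : Measurable f := Measure.measurable_rnDeriv ν μ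
  have hμA0 : μ A ≠ 0 := fun h => hνA (hac h)
  set c := (ν A).toReal with hcdef
  set m := (μ A).toReal with hmdef
  have hc : 0 < c := ENNReal.toReal_pos hνA (measure_ne_top ν A)
  have hm : 0 < m := ENNReal.toReal_pos hμA0 (measure_ne_top μ A)
  -- lintegral bound for the inverse density
  have hres : ν.restrict A = (μ.restrict A).withDensity f := by
    rw [← restrict_withDensity hA, Measure.withDensity_rnDeriv_eq ν μ hac]
  have hL : ∫⁻ t in A, (f t)⁻¹ ∂ν ≤ μ A := by
    rw [hres, lintegral_withDensity_eq_lintegral_mul _ hfm (show Measurable (fun t => (f t)⁻¹) from hfm.inv)]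
    calc ∫⁻ t in A, (f * fun t => (f t)⁻¹) t ∂μ ≤ ∫⁻ _ in A, 1 ∂μ := by
          refine lintegral_mono fun t => ?_
          simp only [Pi.mul_apply]
          rcases eq_or_ne (f t) 0 with h | h
          · simp [h]
          rcases eq_or_ne (f t) ⊤ with h' | h'
          · simp [h']
          · rw [ENNReal.mul_inv_cancel h h']
      _ = μ A := by simp
  have hfpos : ∀ᵐ t ∂ν, 0 < f t := Measure.rnDeriv_pos hac
  have hftop : ∀ᵐ t ∂ν, f t < ⊤ := (Measure.rnDeriv_lt_top ν μ).filter_mono hac.ae_le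
  have hinvtop : ∀ᵐ t ∂(ν.restrict A), (f t)⁻¹ < ⊤ := by
    filter_upwards [ae_restrict_of_ae hfpos] with t ht
    exact ENNReal.inv_lt_top.mpr ht
  have hu_int : Integrable (fun t => ((f t)⁻¹).toReal) (ν.restrict A) :=
    integrable_toReal_of_lintegral_ne_top hfm.inv.aemeasurable
      (ne_top_of_le_ne_top (measure_ne_top μ A) hL)
  have hu_val : ∫ t in A, ((f t)⁻¹).toReal ∂ν ≤ m := by
    rw [integral_toReal (show AEMeasurable (fun t => (f t)⁻¹) (ν.restrict A) from hfm.inv.aemeasurable) hinvtop]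
    exact ENNReal.toReal_mono (measure_ne_top μ A) hL
  -- pointwise inequality
  have hpt : ∀ᵐ t ∂(ν.restrict A),
      (Real.log (c / m) + 1) - (c / m) * ((f t)⁻¹).toReal ≤ Real.log ((f t).toReal) := by
    filter_upwards [ae_restrict_of_ae hfpos, ae_restrict_of_ae hftop] with t h0 htop
    set r := (f t).toReal with hrdef
    have hr : 0 < r := ENNReal.toReal_pos h0.ne' htop.ne
    have hinv : ((f t)⁻¹).toReal = r⁻¹ := ENNReal.toReal_inv _
    rw [hinv]
    have hx : (0:ℝ) < r * m / c := by positivity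
    have h1 : 1 - (r * m / c)⁻¹ ≤ Real.log (r * m / c) := by
      have := Real.log_le_sub_one_of_pos (show (0:ℝ) < (r * m / c)⁻¹ by positivity)
      rw [Real.log_inv] at this
      linarith
    have h2 : Real.log r = Real.log (c / m) + Real.log (r * m / c) := by
      rw [← Real.log_mul (show c / m ≠ 0 by positivity) (show r * m / c ≠ 0 by positivity)]
      congr 1
      field_simp
    have h3 : (r * m / c)⁻¹ = (c / m) * r⁻¹ := by
      rw [inv_div]
      field_simp
    rw [h2]
    rw [h3] at h1
    linarith
  have hLHS_int : Integrable
      (fun t => (Real.log (c / m) + 1) - (c / m) * ((f t)⁻¹).toReal) (ν.restrict A) :=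
    (integrable_const _).sub (hu_int.const_mul _)
  have hmono := integral_mono_ae hLHS_int hint.restrict hpt
  rw [integral_sub (integrable_const _) (hu_int.const_mul _), integral_const,
    integral_const_mul, measureReal_restrict_apply_univ, measureReal_def] at hmono
  have hfin : (c / m) * (∫ t in A, ((f t)⁻¹).toReal ∂ν) ≤ (c / m) * m :=
    mul_le_mul_of_nonneg_left hu_val (by positivity)
  have hcm : (c / m) * m = c := by field_simp
  rw [hcm] at hfin
  have : c * Real.log (c / m) ≤ ((ν A).toReal • (Real.log (c / m) + 1))
      - (c / m) * (∫ t in A, ((f t)⁻¹).toReal ∂ν) := by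
    rw [smul_eq_mul, ← hcdef]
    nlinarith
  linarith

/-- The tilted measure as a `withDensity`. -/
lemma tiltedMu_eq_withDensity_s1 (μ : Measure ℝ≥0∞) (T a p : ℝ) :
    tiltedMu μ T a p = μ.withDensity
      ((Set.Iio (ENNReal.ofReal T)).indicator (fun _ => ENNReal.ofReal (a / p)) +
       (Set.Ici (ENNReal.ofReal T)).indicator (fun _ => ENNReal.ofReal ((1 - a) / (1 - p)))) := by
  rw [withDensity_add_left (measurable_const.indicator measurableSet_Iio),
    withDensity_indicator measurableSet_Iio, withDensity_indicator measurableSet_Ici,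
    withDensity_const, withDensity_const]
  rfl

theorem stmt1 (μ : Measure ℝ≥0∞) [IsProbabilityMeasure μ] (T p : ℝ)
    (hT : 0 < T) (hpμ : μ (Set.Iio (ENNReal.ofReal T)) = ENNReal.ofReal p)
    (hp0 : 0 < p) (hp1 : p < 1) :
    ∀ α' ∈ Set.Icc (0 : ℝ) 1,
      sInf {x : ℝ≥0∞ | ∃ ν : Measure ℝ≥0∞, IsProbabilityMeasure ν ∧
          ν (Set.Iio (ENNReal.ofReal T)) = ENNReal.ofReal α' ∧ x = relEntropy ν μ}
        = ENNReal.ofReal (hbar α' p) ∧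
      relEntropy (tiltedMu μ T α' p) μ = ENNReal.ofReal (hbar α' p) := by
  intro a ha
  obtain ⟨ha0, ha1⟩ := ha
  set S : Set ℝ≥0∞ := Set.Iio (ENNReal.ofReal T) with hSdef
  have hS : MeasurableSet S := measurableSet_Iio
  have hScompl : Sᶜ = Set.Ici (ENNReal.ofReal T) := compl_Iio
  have hμc : μ (Set.Ici (ENNReal.ofReal T)) = ENNReal.ofReal (1 - p) := by
    rw [← hScompl]; exact meas_compl_ofReal μ hS hp0.le hpμ
  -- the density of the tilted measure
  set g : ℝ≥0∞ → ℝ≥0∞ :=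
    (Set.Iio (ENNReal.ofReal T)).indicator (fun _ => ENNReal.ofReal (a / p)) +
      (Set.Ici (ENNReal.ofReal T)).indicator (fun _ => ENNReal.ofReal ((1 - a) / (1 - p)))
    with hgdef
  have hgm : Measurable g :=
    (measurable_const.indicator measurableSet_Iio).add
      (measurable_const.indicator measurableSet_Ici)
  have htilt : tiltedMu μ T a p = μ.withDensity g := tiltedMu_eq_withDensity_s1 μ T a p
  set ν : Measure ℝ≥0∞ := tiltedMu μ T a p with hνdef
  have hac : ν ≪ μ := by rw [htilt]; exact withDensity_absolutelyContinuous μ g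
  -- measure computations
  have hνS : ν S = ENNReal.ofReal a := by
    rw [hνdef, tiltedMu]
    simp only [Measure.add_apply, Measure.smul_apply, smul_eq_mul]
    rw [Measure.restrict_apply hS, Measure.restrict_apply hS]
    have h1 : S ∩ S = S := Set.inter_self S
    have h2 : S ∩ Set.Ici (ENNReal.ofReal T) = ∅ := by
      rw [← hScompl]; exact Set.inter_compl_self S
    rw [h1, h2, hpμ, measure_empty, mul_zero, add_zero, ← ENNReal.ofReal_mul (div_nonneg ha0 hp0.le),
      div_mul_cancel₀ _ hp0.ne']
  have hνc : ν (Set.Ici (ENNReal.ofReal T)) = ENNReal.ofReal (1 - a) := by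
    rw [hνdef, tiltedMu]
    simp only [Measure.add_apply, Measure.smul_apply, smul_eq_mul]
    rw [Measure.restrict_apply measurableSet_Ici, Measure.restrict_apply measurableSet_Ici]
    have h1 : Set.Ici (ENNReal.ofReal T) ∩ S = ∅ := by
      rw [← hScompl]; exact Set.compl_inter_self S
    rw [h1, Set.inter_self, hμc, measure_empty, mul_zero, zero_add,
      ← ENNReal.ofReal_mul (div_nonneg (by linarith) (by linarith : (0:ℝ) ≤ 1 - p)), div_mul_cancel₀ _ (by linarith : (1:ℝ) - p ≠ 0)]
  have hνprob : IsProbabilityMeasure ν := by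
    constructor
    rw [← measure_add_measure_compl hS (μ := ν), hScompl, hνS, hνc,
      ← ENNReal.ofReal_add ha0 (by linarith)]
    norm_num
  -- entropy of the tilted measure
  have hrn : ν.rnDeriv μ =ᵐ[μ] g := by
    rw [htilt]; exact Measure.rnDeriv_withDensity μ hgm
  have hrnν : ν.rnDeriv μ =ᵐ[ν] g := hac.ae_eq hrn
  -- the simple log-density function
  set ψ : ℝ≥0∞ → ℝ :=
    fun t => (Set.Iio (ENNReal.ofReal T)).indicator (fun _ => Real.log (a / p)) t +
      (Set.Ici (ENNReal.ofReal T)).indicator (fun _ => Real.log ((1 - a) / (1 - p))) t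
    with hψdef
  have hgψ : ∀ t, Real.log ((g t).toReal) = ψ t := by
    intro t
    by_cases ht : t < ENNReal.ofReal T
    · have ht' : ¬ (ENNReal.ofReal T ≤ t) := not_le.mpr ht
      simp [hgdef, hψdef, Set.indicator_of_mem, Set.indicator_of_notMem, ht, ht',
        ENNReal.toReal_ofReal (div_nonneg ha0 hp0.le)]
    · have ht' : ENNReal.ofReal T ≤ t := not_lt.mp ht
      simp only [hgdef, hψdef, Pi.add_apply, Set.indicator_of_mem, Set.indicator_of_notMem,
        Set.mem_Iio, Set.mem_Ici, ht, ht', not_false_iff, zero_add]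
      rw [ENNReal.toReal_ofReal (div_nonneg (by linarith) (by linarith : (0:ℝ) ≤ 1 - p))]
  have hlogae : (fun t => Real.log ((ν.rnDeriv μ t).toReal)) =ᵐ[ν] ψ := by
    filter_upwards [hrnν] with t ht
    rw [ht]; exact hgψ t
  have hψint : Integrable ψ ν := by
    haveI := hνprob
    exact ((integrable_const _).indicator hS).add ((integrable_const _).indicator measurableSet_Ici)
  have hint : Integrable (fun t => Real.log ((ν.rnDeriv μ t).toReal)) ν :=
    hψint.congr hlogae.symm
  have hψval : ∫ t, ψ t ∂ν = hbar a p := by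
    haveI := hνprob
    rw [hψdef]
    rw [integral_add ((integrable_const _).indicator hS)
      ((integrable_const _).indicator measurableSet_Ici),
      integral_indicator_const _ hS, integral_indicator_const _ measurableSet_Ici, measureReal_def, measureReal_def, hνS, hνc,
      ENNReal.toReal_ofReal ha0, ENNReal.toReal_ofReal (by linarith), hbar]
    simp [smul_eq_mul]
  have hent : relEntropy ν μ = ENNReal.ofReal (hbar a p) := by
    rw [relEntropy, if_pos ⟨hac, hint⟩, integral_congr_ae hlogae, hψval]
  -- lower bound for arbitrary competitors
  have hlow : ∀ ν' : Measure ℝ≥0∞, IsProbabilityMeasure ν' →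
      ν' S = ENNReal.ofReal a → ENNReal.ofReal (hbar a p) ≤ relEntropy ν' μ := by
    intro ν' hν' hν'S
    rw [relEntropy]
    split_ifs with h
    · obtain ⟨hac', hint'⟩ := h
      refine ENNReal.ofReal_le_ofReal ?_
      have hν'c : ν' Sᶜ = ENNReal.ofReal (1 - a) := meas_compl_ofReal ν' hS ha0 hν'S
      rw [← integral_add_compl hS hint', hbar]
      have hpart1 : a * Real.log (a / p) ≤ ∫ t in S, Real.log ((ν'.rnDeriv μ t).toReal) ∂ν' := by
        rcases eq_or_lt_of_le ha0 with h0 | h0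
        · rw [← h0]
          have : ν'.restrict S = 0 := Measure.restrict_eq_zero.mpr (by rw [hν'S, ← h0]; simp)
          rw [this]
          simp
        · have := setIntegral_log_rnDeriv_ge ν' μ hac' hint' hS
            (by rw [hν'S]; simpa using (ENNReal.ofReal_pos.mpr h0).ne')
          rwa [hν'S, hpμ, ENNReal.toReal_ofReal ha0, ENNReal.toReal_ofReal hp0.le] at this
      have hpart2 : (1 - a) * Real.log ((1 - a) / (1 - p))
          ≤ ∫ t in Sᶜ, Real.log ((ν'.rnDeriv μ t).toReal) ∂ν' := by
        rcases eq_or_lt_of_le ha1 with h1 | h1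
        · rw [h1]
          have : ν'.restrict Sᶜ = 0 := Measure.restrict_eq_zero.mpr
            (by rw [hν'c, h1]; simp)
          rw [this]
          simp
        · have hμSc : μ Sᶜ = ENNReal.ofReal (1 - p) := meas_compl_ofReal μ hS hp0.le hpμ
          have := setIntegral_log_rnDeriv_ge ν' μ hac' hint' hS.compl
            (by rw [hν'c]; simpa using (ENNReal.ofReal_pos.mpr (by linarith : (0:ℝ) < 1 - a)).ne')
          rwa [hν'c, hμSc, ENNReal.toReal_ofReal (by linarith),
            ENNReal.toReal_ofReal (by linarith)] at this
      linarith
    · exact le_top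
  refine ⟨le_antisymm ?_ ?_, hent⟩
  · exact sInf_le ⟨ν, hνprob, hνS, hent.symm⟩
  · refine le_sInf ?_
    rintro x ⟨ν', hν', hν'S, rfl⟩
    exact hlow ν' hν' hν'S

end
end

section
/- Let μ and ν be Borel probability measures on I = [0,∞], let T > 0, suppose p = μ[0,T) ∈ (0,1) and that ν is absolutely continuous with respect to μ. Set α' = ν[0,T). Then H(ν|μ) = ħ(α',p) if and only if ν = μ*_{α'}. -/
open MeasureTheory Filter Set
open scoped ENNReal NNReal Classical

noncomputable section


lemma hbar_nonneg' {a p : ℝ} (ha0 : 0 ≤ a) (ha1 : a ≤ 1) (hp0 : 0 < p) (hp1 : p < 1) :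
    0 ≤ a * Real.log (a / p) + (1 - a) * Real.log ((1 - a) / (1 - p)) := by
  rcases eq_or_lt_of_le ha0 with h0 | h0
  · simp only [← h0, zero_mul, sub_zero, one_mul, zero_add]
    rw [Real.log_div one_ne_zero (by linarith), Real.log_one]
    have := Real.log_nonpos (by linarith) (by linarith : (1:ℝ) - p ≤ 1)
    linarith
  rcases eq_or_lt_of_le ha1 with h1 | h1
  · simp only [h1, sub_self, zero_mul, add_zero, one_mul]
    rw [Real.log_div one_ne_zero (ne_of_gt hp0), Real.log_one]
    have := Real.log_nonpos (le_of_lt hp0) (le_of_lt hp1)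
    linarith
  · have hb1 : Real.log (p / a) ≤ p / a - 1 := Real.log_le_sub_one_of_pos (by positivity)
    have hb2 : Real.log ((1 - p) / (1 - a)) ≤ (1 - p) / (1 - a) - 1 :=
      Real.log_le_sub_one_of_pos (by apply div_pos <;> linarith)
    have e1 : Real.log (a / p) = - Real.log (p / a) := by
      rw [← Real.log_inv]; congr 1; field_simp
    have e2 : Real.log ((1 - a) / (1 - p)) = - Real.log ((1 - p) / (1 - a)) := by
      rw [← Real.log_inv]; congr 1; field_simp
    rw [e1, e2]
    have key1 : a * (p / a) = p := by field_simp
    have key2 : (1 - a) * ((1 - p) / (1 - a)) = 1 - p := by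
      rw [mul_comm]; exact div_mul_cancel₀ _ (by linarith)
    have hd1 : a * (p / a - 1) = p - a := by rw [mul_sub, key1]; ring
    have hd2 : (1 - a) * ((1 - p) / (1 - a) - 1) = a - p := by rw [mul_sub, key2]; ring
    nlinarith [mul_le_mul_of_nonneg_left hb1 ha0,
      mul_le_mul_of_nonneg_left hb2 (by linarith : (0:ℝ) ≤ 1 - a)]

/-- Jensen piece: lower bound with equality case for `∫ f log f` on a set. -/
lemma jensen_piece {μ : Measure ℝ≥0∞} [IsFiniteMeasure μ] {f : ℝ≥0∞ → ℝ} {s : Set ℝ≥0∞}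
    {q r : ℝ} (hq : 0 < q) (hm : (μ s).toReal = q)
    (hf0 : ∀ᵐ x ∂μ.restrict s, 0 ≤ f x) (hfi : Integrable f (μ.restrict s))
    (hI : ∫ x in s, f x ∂μ = r)
    (hgi : Integrable (fun x => f x * Real.log (f x)) (μ.restrict s)) :
    r * Real.log (r / q) ≤ ∫ x in s, f x * Real.log (f x) ∂μ ∧
      (r * Real.log (r / q) = ∫ x in s, f x * Real.log (f x) ∂μ →
        f =ᵐ[μ.restrict s] fun _ => r / q) := by
  have havg : ⨍ x, f x ∂(μ.restrict s) = r / q := by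
    rw [average_eq, measureReal_def, Measure.restrict_apply_univ, hm]
    simp only [smul_eq_mul]
    rw [hI]; ring
  have hdich := Real.strictConvexOn_mul_log.ae_eq_const_or_map_average_lt
    Real.continuous_mul_log.continuousOn isClosed_Ici (μ := μ.restrict s)
    (by filter_upwards [hf0] with x hx using hx) hfi hgi
  rcases hdich with hconst | hlt
  · rw [havg] at hconst
    have heq : ∫ x in s, f x * Real.log (f x) ∂μ = r * Real.log (r / q) := by
      have : ∫ x in s, f x * Real.log (f x) ∂μ
          = ∫ _x in s, (r / q) * Real.log (r / q) ∂μ := by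
        apply integral_congr_ae
        filter_upwards [hconst] with x hx
        rw [hx]
        simp only [Function.const_apply]
      rw [this, setIntegral_const, measureReal_def, hm, smul_eq_mul]
      field_simp
    exact ⟨le_of_eq heq.symm, fun _ => hconst⟩
  · rw [havg] at hlt
    have havg2 : ⨍ x, (fun y => y * Real.log y) (f x) ∂(μ.restrict s)
        = q⁻¹ * ∫ x in s, f x * Real.log (f x) ∂μ := by
      rw [average_eq, measureReal_def, Measure.restrict_apply_univ, hm, smul_eq_mul]

    rw [havg2] at hlt
    have hstrict : r * Real.log (r / q) < ∫ x in s, f x * Real.log (f x) ∂μ := by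
      have := (mul_lt_mul_iff_right₀ hq).mpr hlt
      rw [← mul_assoc, ← mul_assoc, mul_inv_cancel₀ (ne_of_gt hq), one_mul] at this
      calc r * Real.log (r / q) = q * (r / q) * Real.log (r / q) := by field_simp
        _ < _ := this
    exact ⟨le_of_lt hstrict, fun h => absurd h (ne_of_lt hstrict)⟩

theorem stmt3 (μ ν : Measure ℝ≥0∞) [IsProbabilityMeasure μ] [IsProbabilityMeasure ν]
    (T p : ℝ) (hT : 0 < T) (hpμ : μ (Set.Iio (ENNReal.ofReal T)) = ENNReal.ofReal p)
    (hp0 : 0 < p) (hp1 : p < 1) (hac : ν ≪ μ) :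
    relEntropy ν μ = ENNReal.ofReal (hbar ((ν (Set.Iio (ENNReal.ofReal T))).toReal) p) ↔
      ν = tiltedMu μ T ((ν (Set.Iio (ENNReal.ofReal T))).toReal) p := by
  set A : Set ℝ≥0∞ := Set.Iio (ENNReal.ofReal T) with hAdef
  have hA : MeasurableSet A := measurableSet_Iio
  have hBc : Set.Ici (ENNReal.ofReal T) = Aᶜ := Set.compl_Iio.symm
  set a : ℝ := (ν A).toReal with hadef
  have haA : ν A = ENNReal.ofReal a := (ENNReal.ofReal_toReal (measure_ne_top ν A)).symm
  have ha0 : 0 ≤ a := ENNReal.toReal_nonneg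
  have ha1 : a ≤ 1 := by
    calc a ≤ (1 : ℝ≥0∞).toReal := ENNReal.toReal_mono ENNReal.one_ne_top prob_le_one
    _ = 1 := by simp
  have hμA_toReal : (μ A).toReal = p := by rw [hpμ, ENNReal.toReal_ofReal hp0.le]
  have hμB : μ Aᶜ = ENNReal.ofReal (1 - p) := by
    rw [measure_compl hA (measure_ne_top μ A), measure_univ, hpμ,
      ENNReal.ofReal_sub _ hp0.le, ENNReal.ofReal_one]
  have hμB_toReal : (μ Aᶜ).toReal = 1 - p := by
    rw [hμB, ENNReal.toReal_ofReal (by linarith)]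
  have hνB : ν Aᶜ = ENNReal.ofReal (1 - a) := by
    rw [measure_compl hA (measure_ne_top ν A), measure_univ, haA,
      ENNReal.ofReal_sub _ ha0, ENNReal.ofReal_one]
  have hνB_toReal : (ν Aᶜ).toReal = 1 - a := by
    rw [hνB, ENNReal.toReal_ofReal (by linarith)]
  have hg : Measurable (ν.rnDeriv μ) := Measure.measurable_rnDeriv ν μ
  set F : ℝ≥0∞ → ℝ := fun t => (ν.rnDeriv μ t).toReal with hF
  have hFm : Measurable F := hg.ennreal_toReal
  have hfin : ∀ᵐ t ∂μ, ν.rnDeriv μ t < ∞ := Measure.rnDeriv_lt_top ν μ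
  have hfnm : Measurable (fun t => Real.toNNReal (F t)) := hFm.real_toNNReal
  have hwd : μ.withDensity (fun t => ((Real.toNNReal (F t) : ℝ≥0) : ℝ≥0∞)) = ν := by
    rw [← Measure.withDensity_rnDeriv_eq ν μ hac]
    apply withDensity_congr_ae
    filter_upwards [hfin] with t ht
    rw [show ((Real.toNNReal (F t) : ℝ≥0) : ℝ≥0∞) = ENNReal.ofReal (F t) from rfl]
    exact ENNReal.ofReal_toReal ht.ne
  have htrans : ∀ (s : Set ℝ≥0∞), MeasurableSet s → ∀ h : ℝ≥0∞ → ℝ,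
      ∫ x in s, h x ∂ν = ∫ x in s, F x * h x ∂μ := by
    intro s hs h
    conv_lhs => rw [← hwd]
    rw [setIntegral_withDensity_eq_setIntegral_smul hfnm h hs]
    apply integral_congr_ae
    apply Eventually.of_forall
    intro x
    simp [NNReal.smul_def, Real.coe_toNNReal _ ENNReal.toReal_nonneg]
    exact Or.inl ENNReal.toReal_nonneg
  have hIntIff : ∀ (s : Set ℝ≥0∞), MeasurableSet s → ∀ h : ℝ≥0∞ → ℝ,
      Integrable h (ν.restrict s) ↔ Integrable (fun x => F x * h x) (μ.restrict s) := by
    intro s hs h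
    conv_lhs => rw [← hwd]
    rw [restrict_withDensity hs, integrable_withDensity_iff_integrable_smul hfnm]
    apply integrable_congr
    apply Eventually.of_forall
    intro x
    simp [NNReal.smul_def, Real.coe_toNNReal _ ENNReal.toReal_nonneg]
    exact Or.inl ENNReal.toReal_nonneg
  have hIA : ∫ x in A, F x ∂μ = a := by
    rw [hF, integral_toReal (hg.aemeasurable.restrict) (ae_restrict_of_ae hfin),
      Measure.setLIntegral_rnDeriv hac A]
  have hIB : ∫ x in Aᶜ, F x ∂μ = 1 - a := by
    rw [hF, integral_toReal (hg.aemeasurable.restrict) (ae_restrict_of_ae hfin),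
      Measure.setLIntegral_rnDeriv hac Aᶜ, hνB, ENNReal.toReal_ofReal (by linarith)]
  have hfi : Integrable F μ := Measure.integrable_toReal_rnDeriv
  have hf0 : ∀ (s : Set ℝ≥0∞), ∀ᵐ x ∂μ.restrict s, 0 ≤ F x :=
    fun s => Eventually.of_forall fun x => ENNReal.toReal_nonneg
  constructor
  · intro h
    by_cases hint : Integrable (fun t => Real.log (F t)) ν
    swap
    · rw [relEntropy, if_neg (fun hc => hint hc.2)] at h
      exact absurd h.symm (ENNReal.ofReal_ne_top)
    rw [relEntropy, if_pos ⟨hac, hint⟩] at h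
    have hintA : Integrable (fun x => F x * Real.log (F x)) (μ.restrict A) :=
      (hIntIff A hA (fun x => Real.log (F x))).mp hint.restrict
    have hintB : Integrable (fun x => F x * Real.log (F x)) (μ.restrict Aᶜ) :=
      (hIntIff Aᶜ hA.compl (fun x => Real.log (F x))).mp hint.restrict
    have hJA := jensen_piece hp0 hμA_toReal (hf0 A) hfi.restrict hIA hintA
    have hJB := jensen_piece (by linarith : (0:ℝ) < 1 - p) hμB_toReal (hf0 Aᶜ)
      hfi.restrict hIB hintB
    have htot : ∫ t, Real.log (F t) ∂ν
        = (∫ x in A, F x * Real.log (F x) ∂μ) + (∫ x in Aᶜ, F x * Real.log (F x) ∂μ) := by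
      rw [← htrans A hA _, ← htrans Aᶜ hA.compl _, integral_add_compl hA hint]
    have hnn : hbar a p ≤ ∫ t, Real.log (F t) ∂ν := by
      rw [htot, hbar]
      exact add_le_add hJA.1 hJB.1
    have h0 : 0 ≤ hbar a p := by
      rw [hbar]; exact hbar_nonneg' ha0 ha1 hp0 hp1
    have h' : ENNReal.ofReal (∫ t, Real.log (F t) ∂ν) = ENNReal.ofReal (hbar a p) := h
    have hreal : ∫ t, Real.log (F t) ∂ν = hbar a p := by
      rwa [ENNReal.ofReal_eq_ofReal_iff (le_trans h0 hnn) h0] at h'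
    rw [htot] at hreal
    have hbar_eq : hbar a p = a * Real.log (a / p) + (1 - a) * Real.log ((1 - a) / (1 - p)) := rfl
    have hEA : a * Real.log (a / p) = ∫ x in A, F x * Real.log (F x) ∂μ := by
      have := hJA.1; have := hJB.1; linarith [hreal, hbar_eq]
    have hEB : (1 - a) * Real.log ((1 - a) / (1 - p)) = ∫ x in Aᶜ, F x * Real.log (F x) ∂μ := by
      have := hJA.1; have := hJB.1; linarith [hreal, hbar_eq]
    have hcA := hJA.2 hEA
    have hcB := hJB.2 hEB
    have hgA : ν.rnDeriv μ =ᵐ[μ.restrict A] fun _ => ENNReal.ofReal (a / p) := by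
      filter_upwards [hcA, ae_restrict_of_ae hfin] with x hx hx2
      rw [← hx, hF]
      exact (ENNReal.ofReal_toReal hx2.ne).symm
    have hgB : ν.rnDeriv μ =ᵐ[μ.restrict Aᶜ] fun _ => ENNReal.ofReal ((1 - a) / (1 - p)) := by
      filter_upwards [hcB, ae_restrict_of_ae hfin] with x hx hx2
      rw [← hx, hF]
      exact (ENNReal.ofReal_toReal hx2.ne).symm
    ext s hs
    have hsplit : ν (s ∩ A) + ν (s \ A) = ν s := measure_inter_add_diff s hA
    have h1 : ν (s ∩ A) = ENNReal.ofReal (a / p) * μ (s ∩ A) := by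
      rw [← Measure.withDensity_rnDeriv_eq ν μ hac, withDensity_apply _ (hs.inter hA),
        lintegral_congr_ae (ae_restrict_of_ae_restrict_of_subset inter_subset_right hgA),
        setLIntegral_const]
    have h2 : ν (s \ A) = ENNReal.ofReal ((1 - a) / (1 - p)) * μ (s \ A) := by
      rw [diff_eq, ← Measure.withDensity_rnDeriv_eq ν μ hac,
        withDensity_apply _ (hs.inter hA.compl),
        lintegral_congr_ae (ae_restrict_of_ae_restrict_of_subset inter_subset_right hgB),
        setLIntegral_const]
    rw [tiltedMu, ← hAdef, hBc]
    simp only [Measure.add_apply, Measure.smul_apply, smul_eq_mul,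
      Measure.restrict_apply hs]
    rw [← hsplit, h1, h2, diff_eq]
  · intro h
    have hh0m : Measurable (fun t => if t ∈ A then ENNReal.ofReal (a / p)
        else ENNReal.ofReal ((1 - a) / (1 - p))) :=
      Measurable.ite hA measurable_const measurable_const
    have hfun : (fun t => if t ∈ A then ENNReal.ofReal (a / p)
        else ENNReal.ofReal ((1 - a) / (1 - p)))
        = A.indicator (fun _ => ENNReal.ofReal (a / p))
          + Aᶜ.indicator (fun _ => ENNReal.ofReal ((1 - a) / (1 - p))) := by
      funext t
      by_cases ht : t ∈ A <;> simp [ht]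
    have hwd2 : μ.withDensity (fun t => if t ∈ A then ENNReal.ofReal (a / p)
        else ENNReal.ofReal ((1 - a) / (1 - p))) = tiltedMu μ T a p := by
      rw [hfun, withDensity_add_left ((measurable_const).indicator hA),
        withDensity_indicator hA, withDensity_indicator hA.compl,
        withDensity_const, withDensity_const, tiltedMu, ← hAdef, hBc]
    have hrn : ν.rnDeriv μ =ᵐ[μ] (fun t => if t ∈ A then ENNReal.ofReal (a / p)
        else ENNReal.ofReal ((1 - a) / (1 - p))) := by
      have := Measure.rnDeriv_withDensity μ hh0m
      rw [hwd2, ← h] at this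
      exact this
    have hrnν := hac.ae_eq hrn
    have hφ : (fun t => Real.log (F t)) =ᵐ[ν]
        (fun t => if t ∈ A then Real.log (a / p) else Real.log ((1 - a) / (1 - p))) := by
      filter_upwards [hrnν] with t ht
      rw [hF]
      simp only [ht]
      by_cases h' : t ∈ A
      · simp only [h', if_true]
        rw [ENNReal.toReal_ofReal (div_nonneg ha0 hp0.le)]
      · simp only [h', if_false]
        rw [ENNReal.toReal_ofReal (div_nonneg (by linarith) (by linarith))]
    have hφfun : (fun t => if t ∈ A then Real.log (a / p) else Real.log ((1 - a) / (1 - p)))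
        = fun t => A.indicator (fun _ => Real.log (a / p)) t
          + Aᶜ.indicator (fun _ => Real.log ((1 - a) / (1 - p))) t := by
      funext t
      by_cases ht : t ∈ A <;> simp [ht]
    have hφint : Integrable (fun t => if t ∈ A then Real.log (a / p)
        else Real.log ((1 - a) / (1 - p))) ν := by
      rw [hφfun]
      exact ((integrable_const _).indicator hA).add ((integrable_const _).indicator hA.compl)
    have hint : Integrable (fun t => Real.log (F t)) ν := hφint.congr hφ.symm
    have hIcalc : ∫ t, Real.log (F t) ∂ν = hbar a p := by
      rw [integral_congr_ae hφ, hφfun,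
        integral_add ((integrable_const _).indicator hA) ((integrable_const _).indicator hA.compl),
        integral_indicator hA, integral_indicator hA.compl,
        setIntegral_const, setIntegral_const, measureReal_def, measureReal_def, hνB_toReal, ← hadef]
      rw [hbar]
      simp [smul_eq_mul]
    rw [relEntropy, if_pos ⟨hac, hint⟩]
    exact congrArg ENNReal.ofReal hIcalc

end
end

section
/- Assume p = μ[0,T) ∈ (0,1) and 0 < α < β ≤ 1 with α < 1. Let P = μ^{⊗N} and P̃_N = (μ*_α)^{⊗N} be the N-fold product measures on I^N with coordinates τ_1,…,τ_N, let κ = ln( (α(1−p)) / ((1−α)p) ) and γ_N = N·(L^{(N)}_{T−} − α), where L^{(N)}_{T−} = (1/N)·#{n ≤ N : τ_n < T}. Then E_P[P^prot_N] = e^{−N·ħ(α,p)} · E_{P̃_N}[ P^prot_N · e^{−κ·γ_N} · 1_{{γ_N > 0}} ]. -/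
open MeasureTheory Filter Set
open scoped ENNReal NNReal Classical

noncomputable section


/-- The notional loss `L^{(N)}_t = (1/N)·#{n : τ_n ≤ t}`. -/
def lossAt (N : ℕ) (τ : Fin N → ℝ≥0∞) (t : ℝ) : ℝ :=
  ((Finset.univ.filter fun n => τ n ≤ ENNReal.ofReal t).card : ℝ) / N

/-- The loss just before expiry, `L^{(N)}_{T−} = (1/N)·#{n : τ_n < T}`. -/
def lossTm (N : ℕ) (T : ℝ) (τ : Fin N → ℝ≥0∞) : ℝ :=
  ((Finset.univ.filter fun n => τ n < ENNReal.ofReal T).card : ℝ) / N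

/-- The tranching function `x ↦ ((x−α)⁺ − (x−β)⁺)/(β−α)`. -/
def tranche (α β x : ℝ) : ℝ := (max (x - α) 0 - max (x - β) 0) / (β - α)

/-- The tranched loss just before expiry, `L̄^{(N)}_{T−} = sup_{t<T} L̄^{(N)}_t`. -/
def trancheTm (N : ℕ) (T α β : ℝ) (τ : Fin N → ℝ≥0∞) : ℝ :=
  ⨆ t : Set.Iio T, tranche α β (lossAt N τ t)

/-- The protection-leg value
`P^prot_N = e^{−RT}·L̄^{(N)}_{T−} + R·∫_{(0,T)} e^{−Rs}·L̄^{(N)}_s ds`. -/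
def Pprot (N : ℕ) (T R α β : ℝ) (τ : Fin N → ℝ≥0∞) : ℝ :=
  Real.exp (-(R * T)) * trancheTm N T α β τ +
    R * ∫ s in Set.Ioo (0 : ℝ) T, Real.exp (-(R * s)) * tranche α β (lossAt N τ s)


section Aux

variable {T α β R p : ℝ} {N : ℕ}

lemma tranche_eq_min (hαβ : α < β) (x : ℝ) :
    tranche α β x = min (max (x - α) 0) (β - α) / (β - α) := by
  unfold tranche
  congr 1
  rcases le_total x α with h | h
  · rw [max_eq_right (by linarith), max_eq_right (by linarith)]
    simp [le_of_lt (by linarith : (0:ℝ) < β - α)]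
  · rcases le_total x β with h2 | h2
    · rw [max_eq_left (by linarith), max_eq_right (by linarith)]
      simp [min_eq_left (by linarith : x - α ≤ β - α)]
    · rw [max_eq_left (by linarith), max_eq_left (by linarith)]
      rw [min_eq_right (by linarith)]
      ring

lemma tranche_mono (hαβ : α < β) : Monotone (tranche α β) := by
  intro x y hxy
  rw [tranche_eq_min hαβ, tranche_eq_min hαβ]
  apply div_le_div_of_nonneg_right ?_ (by linarith) |>.trans_eq rfl
  exact min_le_min (max_le_max (by linarith) le_rfl) le_rfl

lemma tranche_nonneg (hαβ : α < β) (x : ℝ) : 0 ≤ tranche α β x := by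
  rw [tranche_eq_min hαβ]
  exact div_nonneg (le_min (le_max_right _ _) (by linarith)) (by linarith)

lemma tranche_le_one (hαβ : α < β) (x : ℝ) : tranche α β x ≤ 1 := by
  rw [tranche_eq_min hαβ]
  exact div_le_one_of_le₀ (min_le_right _ _) (by linarith)

lemma tranche_eq_zero {x : ℝ} (hαβ : α < β) (hx : x ≤ α) : tranche α β x = 0 := by
  rw [tranche_eq_min hαβ, max_eq_right (by linarith), min_eq_left (by linarith), zero_div]

lemma continuous_tranche : Continuous (tranche α β) := by
  unfold tranche; fun_prop

lemma ofReal_lt_ofReal_of_lt {t T : ℝ} (hT : 0 < T) (h : t < T) :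
    ENNReal.ofReal t < ENNReal.ofReal T := by
  rcases le_or_gt t 0 with h0 | h0
  · rw [ENNReal.ofReal_eq_zero.2 h0]
    simpa using ENNReal.ofReal_pos.2 hT
  · exact (ENNReal.ofReal_lt_ofReal_iff hT).2 h

lemma lossAt_le_lossTm {τ : Fin N → ℝ≥0∞} {t : ℝ} (hT : 0 < T) (h : t < T) :
    lossAt N τ t ≤ lossTm N T τ := by
  unfold lossAt lossTm
  rcases Nat.eq_zero_or_pos N with h0 | h0
  · subst h0; simp
  · rw [div_le_div_iff_of_pos_right (by exact_mod_cast h0)]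
    have : (Finset.univ.filter fun n => τ n ≤ ENNReal.ofReal t) ⊆
        (Finset.univ.filter fun n => τ n < ENNReal.ofReal T) := by
      intro n hn
      simp only [Finset.mem_filter, Finset.mem_univ, true_and] at hn ⊢
      exact lt_of_le_of_lt hn (ofReal_lt_ofReal_of_lt hT h)
    exact_mod_cast Finset.card_le_card this

lemma lossTm_nonneg (N : ℕ) (T : ℝ) (τ : Fin N → ℝ≥0∞) : 0 ≤ lossTm N T τ :=
  div_nonneg (Nat.cast_nonneg _) (Nat.cast_nonneg _)

lemma lossTm_le_one (N : ℕ) (T : ℝ) (τ : Fin N → ℝ≥0∞) : lossTm N T τ ≤ 1 := by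
  unfold lossTm
  rcases Nat.eq_zero_or_pos N with h | h
  · subst h; simp
  · rw [div_le_one (by exact_mod_cast h)]
    exact_mod_cast (Finset.card_filter_le _ _).trans (by simp)

lemma exists_lossAt_eq (τ : Fin N → ℝ≥0∞) (hT : 0 < T) :
    ∃ t : ℝ, t < T ∧ lossAt N τ t = lossTm N T τ := by
  classical
  set F := Finset.univ.filter fun n => τ n < ENNReal.ofReal T with hF
  rcases Finset.eq_empty_or_nonempty F with hFe | hFne
  · refine ⟨T/2, by linarith, ?_⟩
    unfold lossAt lossTm
    rw [← hF, hFe]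
    have : (Finset.univ.filter fun n => τ n ≤ ENNReal.ofReal (T/2)) = ∅ := by
      rw [Finset.eq_empty_iff_forall_notMem]
      intro n hn
      simp only [Finset.mem_filter, Finset.mem_univ, true_and] at hn
      have : n ∈ F := by
        rw [hF]
        simp only [Finset.mem_filter, Finset.mem_univ, true_and]
        exact lt_of_le_of_lt hn (ofReal_lt_ofReal_of_lt hT (by linarith))
      rw [hFe] at this; exact absurd this (Finset.notMem_empty n)
    rw [this]
  · set t : ℝ := max (T/2) (F.sup' hFne fun n => (τ n).toReal) with ht
    have htT : t < T := by
      rw [ht, max_lt_iff]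
      refine ⟨by linarith, ?_⟩
      apply (Finset.sup'_lt_iff hFne).2
      intro n hn
      rw [hF, Finset.mem_filter] at hn
      exact ENNReal.toReal_lt_of_lt_ofReal hn.2
    refine ⟨t, htT, ?_⟩
    have hfe : (Finset.univ.filter fun n => τ n ≤ ENNReal.ofReal t) = F := by
      ext n
      rw [hF]
      simp only [Finset.mem_filter, Finset.mem_univ, true_and]
      constructor
      · intro hn
        exact lt_of_le_of_lt hn (ofReal_lt_ofReal_of_lt hT htT)
      · intro hn
        have hne : τ n ≠ ⊤ := hn.ne_top
        calc τ n = ENNReal.ofReal (τ n).toReal := (ENNReal.ofReal_toReal hne).symm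
        _ ≤ ENNReal.ofReal t := by
            apply ENNReal.ofReal_le_ofReal
            exact le_max_of_le_right
              (Finset.le_sup' (fun n => (τ n).toReal) (by rw [hF]; simp [hn]))
    unfold lossAt lossTm
    rw [hfe, hF]

lemma trancheTm_eq (hT : 0 < T) (hαβ : α < β) (τ : Fin N → ℝ≥0∞) :
    trancheTm N T α β τ = tranche α β (lossTm N T τ) := by
  haveI : Nonempty (Set.Iio T) := ⟨⟨T - 1, by simp⟩⟩
  have hbdd : BddAbove (Set.range fun t : Set.Iio T => tranche α β (lossAt N τ t)) := by
    refine ⟨tranche α β (lossTm N T τ), ?_⟩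
    rintro x ⟨t, rfl⟩
    exact tranche_mono hαβ (lossAt_le_lossTm hT t.2)
  apply le_antisymm
  · exact ciSup_le fun t => tranche_mono hαβ (lossAt_le_lossTm hT t.2)
  · obtain ⟨t, htT, hEq⟩ := exists_lossAt_eq τ hT
    calc tranche α β (lossTm N T τ) = tranche α β (lossAt N τ t) := by rw [hEq]
    _ ≤ _ := le_ciSup hbdd ⟨t, htT⟩

lemma Pprot_eq (hT : 0 < T) (hαβ : α < β) (N : ℕ) (R : ℝ) (τ : Fin N → ℝ≥0∞) :
    Pprot N T R α β τ = Real.exp (-(R * T)) * tranche α β (lossTm N T τ) +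
      R * ∫ s in Set.Ioo (0 : ℝ) T, Real.exp (-(R * s)) * tranche α β (lossAt N τ s) := by
  rw [Pprot, trancheTm_eq hT hαβ]

lemma Pprot_eq_zero (hT : 0 < T) (hαβ : α < β) (R : ℝ) {τ : Fin N → ℝ≥0∞}
    (h : lossTm N T τ ≤ α) : Pprot N T R α β τ = 0 := by
  rw [Pprot_eq hT hαβ, tranche_eq_zero hαβ h]
  have : ∫ s in Set.Ioo (0 : ℝ) T, Real.exp (-(R * s)) * tranche α β (lossAt N τ s) = 0 := by
    rw [MeasureTheory.setIntegral_congr_fun measurableSet_Ioo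
      (g := fun _ => (0:ℝ)) (fun s hs => ?_)]
    · simp
    · rw [tranche_eq_zero hαβ ((lossAt_le_lossTm hT hs.2).trans h), mul_zero]
  rw [this]
  ring

lemma measurable_lossAt_prod :
    Measurable (fun q : (Fin N → ℝ≥0∞) × ℝ => lossAt N q.1 q.2) := by
  have h : (fun q : (Fin N → ℝ≥0∞) × ℝ => lossAt N q.1 q.2)
      = fun q => (∑ n : Fin N, if q.1 n ≤ ENNReal.ofReal q.2 then (1:ℝ) else 0) / N := by
    funext q
    unfold lossAt
    rw [Finset.card_filter]
    push_cast
    rfl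
  rw [h]
  apply Measurable.div_const
  apply Finset.measurable_sum
  intro n _
  exact Measurable.ite
    (measurableSet_le (measurable_fst.eval)
      (ENNReal.measurable_ofReal.comp measurable_snd))
    measurable_const measurable_const

lemma measurable_lossTm : Measurable (lossTm N T) := by
  have h : lossTm N T
      = fun τ => (∑ n : Fin N, if τ n < ENNReal.ofReal T then (1:ℝ) else 0) / N := by
    funext τ
    unfold lossTm
    rw [Finset.card_filter]
    push_cast
    rfl
  rw [h]
  apply Measurable.div_const
  apply Finset.measurable_sum
  intro n _
  exact Measurable.ite (measurableSet_lt (measurable_pi_apply n) measurable_const)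
    measurable_const measurable_const

lemma measurable_pprot (hT : 0 < T) (hαβ : α < β) :
    Measurable (fun τ : Fin N → ℝ≥0∞ => Pprot N T R α β τ) := by
  have he : (fun τ : Fin N → ℝ≥0∞ => Pprot N T R α β τ)
      = fun τ => Real.exp (-(R * T)) * tranche α β (lossTm N T τ) +
        R * ∫ s in Set.Ioo (0 : ℝ) T, Real.exp (-(R * s)) * tranche α β (lossAt N τ s) :=
    funext (Pprot_eq hT hαβ N R)
  rw [he]
  have hf : StronglyMeasurable (fun q : (Fin N → ℝ≥0∞) × ℝ =>
      Real.exp (-(R * q.2)) * tranche α β (lossAt N q.1 q.2)) := by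
    apply Measurable.stronglyMeasurable
    exact ((Real.measurable_exp.comp ((measurable_const.mul measurable_snd).neg)).mul
      (continuous_tranche.measurable.comp measurable_lossAt_prod))
  exact (measurable_const.mul
      (continuous_tranche.measurable.comp measurable_lossTm)).add
    (measurable_const.mul hf.integral_prod_right'.measurable)

lemma abs_pprot_le (hT : 0 < T) (hR : 0 ≤ R) (hαβ : α < β) (τ : Fin N → ℝ≥0∞) :
    |Pprot N T R α β τ| ≤ 1 + R * T := by
  rw [Pprot_eq hT hαβ]
  have e1 : Real.exp (-(R * T)) ≤ 1 := Real.exp_le_one_iff.2 (by nlinarith)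
  have e0 : (0:ℝ) ≤ Real.exp (-(R * T)) := (Real.exp_pos _).le
  have t0 := tranche_nonneg hαβ (lossTm N T τ)
  have t1 := tranche_le_one hαβ (lossTm N T τ)
  have h1 : |Real.exp (-(R * T)) * tranche α β (lossTm N T τ)| ≤ 1 := by
    rw [abs_mul, abs_of_nonneg e0, abs_of_nonneg t0]
    nlinarith
  have h2 : |∫ s in Set.Ioo (0 : ℝ) T, Real.exp (-(R * s)) * tranche α β (lossAt N τ s)| ≤ T := by
    have := MeasureTheory.norm_setIntegral_le_of_norm_le_const (C := 1)
      (f := fun s => Real.exp (-(R * s)) * tranche α β (lossAt N τ s))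
      (μ := MeasureTheory.volume) (s := Set.Ioo (0:ℝ) T)
      (by rw [Real.volume_Ioo]; exact ENNReal.ofReal_lt_top) ?_
    · rw [measureReal_def, Real.volume_Ioo, sub_zero, ENNReal.toReal_ofReal hT.le, one_mul] at this
      simpa [Real.norm_eq_abs] using this
    · intro s hs
      rw [Real.norm_eq_abs, abs_mul, abs_of_nonneg (Real.exp_pos _).le,
        abs_of_nonneg (tranche_nonneg hαβ _)]
      have : Real.exp (-(R * s)) ≤ 1 := Real.exp_le_one_iff.2 (by nlinarith [hs.1])
      nlinarith [tranche_nonneg hαβ (lossAt N τ s), tranche_le_one hαβ (lossAt N τ s),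
        (Real.exp_pos (-(R * s))).le]
  calc |Real.exp (-(R * T)) * tranche α β (lossTm N T τ) +
      R * ∫ s in Set.Ioo (0 : ℝ) T, Real.exp (-(R * s)) * tranche α β (lossAt N τ s)|
      ≤ |Real.exp (-(R * T)) * tranche α β (lossTm N T τ)| +
        |R * ∫ s in Set.Ioo (0 : ℝ) T, Real.exp (-(R * s)) * tranche α β (lossAt N τ s)| :=
      abs_add_le _ _
  _ ≤ 1 + R * T := by
      have h3 : |R * ∫ s in Set.Ioo (0 : ℝ) T,
          Real.exp (-(R * s)) * tranche α β (lossAt N τ s)|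
          = R * |∫ s in Set.Ioo (0 : ℝ) T,
              Real.exp (-(R * s)) * tranche α β (lossAt N τ s)| := by
        rw [abs_mul, abs_of_nonneg hR]
      rw [h3]
      have := mul_le_mul_of_nonneg_left h2 hR
      linarith

lemma integrable_pprot (hT : 0 < T) (hR : 0 ≤ R) (hαβ : α < β)
    (m : Measure (Fin N → ℝ≥0∞)) [IsFiniteMeasure m] :
    Integrable (fun τ => Pprot N T R α β τ) m := by
  refine Integrable.mono' (integrable_const (1 + R * T))
    (measurable_pprot hT hαβ).aestronglyMeasurable (ae_of_all _ fun τ => ?_)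
  rw [Real.norm_eq_abs]
  exact abs_pprot_le hT hR hαβ τ

lemma key_exp (hp0 : 0 < p) (hp1 : p < 1) (hα0 : 0 < α) (hα1 : α < 1)
    {k : ℕ} (hk : k ≤ N) :
    Real.exp (-(N * hbar α p)) *
      ((α / p) ^ k * ((1 - α) / (1 - p)) ^ (N - k) *
        Real.exp (-(Real.log ((α * (1 - p)) / ((1 - α) * p)) * ((k : ℝ) - N * α)))) = 1 := by
  have hp1' : 0 < 1 - p := by linarith
  have hα1' : 0 < 1 - α := by linarith
  have h1 : (α / p) ^ k = Real.exp (k * Real.log (α / p)) := by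
    rw [Real.exp_nat_mul, Real.exp_log (div_pos hα0 hp0)]
  have h2 : ((1 - α) / (1 - p)) ^ (N - k)
      = Real.exp ((N - k : ℕ) * Real.log ((1 - α) / (1 - p))) := by
    rw [Real.exp_nat_mul, Real.exp_log (div_pos hα1' hp1')]
  rw [h1, h2, ← Real.exp_add, ← Real.exp_add, ← Real.exp_add, Real.exp_eq_one_iff]
  have hNk : ((N - k : ℕ) : ℝ) = (N : ℝ) - k := by
    push_cast [Nat.cast_sub hk]; ring
  rw [hNk]
  rw [hbar, Real.log_div (ne_of_gt hα0) (ne_of_gt hp0),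
    Real.log_div (ne_of_gt hα1') (ne_of_gt hp1'),
    Real.log_div (mul_pos hα0 hp1').ne' (mul_pos hα1' hp0).ne',
    Real.log_mul (ne_of_gt hα0) (ne_of_gt hp1'),
    Real.log_mul (ne_of_gt hα1') (ne_of_gt hp0)]
  ring

lemma pi_restrict (μs : Fin N → Measure ℝ≥0∞) [∀ i, IsFiniteMeasure (μs i)]
    (s : Fin N → Set ℝ≥0∞) (hs : ∀ i, MeasurableSet (s i)) :
    (Measure.pi μs).restrict (Set.pi Set.univ s)
      = Measure.pi (fun i => (μs i).restrict (s i)) := by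
  refine (Measure.pi_eq (μ := fun i => (μs i).restrict (s i)) fun t ht => ?_).symm
  rw [eq_comm, Measure.restrict_apply (MeasurableSet.pi countable_univ fun i _ => ht i),
    ← Set.pi_inter_distrib, Measure.pi_pi]
  exact Finset.prod_congr rfl fun i _ => Measure.restrict_apply (ht i)

lemma tilted_restrict_Iio (μ : Measure ℝ≥0∞) (T a p : ℝ) :
    (tiltedMu μ T a p).restrict (Set.Iio (ENNReal.ofReal T))
      = ENNReal.ofReal (a / p) • μ.restrict (Set.Iio (ENNReal.ofReal T)) := by
  unfold tiltedMu
  rw [Measure.restrict_add, Measure.restrict_smul, Measure.restrict_smul,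
    Measure.restrict_restrict measurableSet_Iio, Measure.restrict_restrict measurableSet_Iio,
    Set.inter_self, Set.Iio_inter_Ici, Set.Ico_self, Measure.restrict_empty]
  simp

lemma tilted_restrict_Ici (μ : Measure ℝ≥0∞) (T a p : ℝ) :
    (tiltedMu μ T a p).restrict (Set.Ici (ENNReal.ofReal T))
      = ENNReal.ofReal ((1 - a) / (1 - p)) • μ.restrict (Set.Ici (ENNReal.ofReal T)) := by
  unfold tiltedMu
  rw [Measure.restrict_add, Measure.restrict_smul, Measure.restrict_smul,
    Measure.restrict_restrict measurableSet_Ici, Measure.restrict_restrict measurableSet_Ici,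
    Set.inter_self]
  have : Set.Ici (ENNReal.ofReal T) ∩ Set.Iio (ENNReal.ofReal T) = ∅ := by
    rw [Set.inter_comm, Set.Iio_inter_Ici, Set.Ico_self]
  rw [this, Measure.restrict_empty]
  simp

lemma pi_smul_cell (μ : Measure ℝ≥0∞) [IsProbabilityMeasure μ] (T a p : ℝ)
    (S : Finset (Fin N)) :
    Measure.pi (fun n : Fin N => (tiltedMu μ T a p).restrict
        (if n ∈ S then Set.Iio (ENNReal.ofReal T) else Set.Ici (ENNReal.ofReal T)))
      = (∏ n : Fin N, if n ∈ S then ENNReal.ofReal (a / p)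
            else ENNReal.ofReal ((1 - a) / (1 - p))) •
        Measure.pi (fun n : Fin N => μ.restrict
          (if n ∈ S then Set.Iio (ENNReal.ofReal T) else Set.Ici (ENNReal.ofReal T))) := by
  refine Measure.pi_eq (μ := fun n : Fin N => (tiltedMu μ T a p).restrict
    (if n ∈ S then Set.Iio (ENNReal.ofReal T) else Set.Ici (ENNReal.ofReal T)))
    fun t ht => ?_
  rw [Measure.smul_apply, Measure.pi_pi, smul_eq_mul, ← Finset.prod_mul_distrib]
  refine Finset.prod_congr rfl fun n _ => ?_
  by_cases hn : n ∈ S <;>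
    simp only [hn, if_true, if_false, tilted_restrict_Iio, tilted_restrict_Ici,
      Measure.smul_apply, smul_eq_mul]

lemma prod_ite_mem_card {M : Type*} [CommMonoid M] (S : Finset (Fin N)) (a b : M) :
    (∏ n : Fin N, if n ∈ S then a else b) = a ^ S.card * b ^ (N - S.card) := by
  rw [Finset.prod_ite, Finset.prod_const, Finset.prod_const]
  congr 2
  · rw [Finset.filter_univ_mem]
  · have : Finset.univ.filter (fun n => ¬ n ∈ S) = Finset.univ \ S := by
      ext n; simp
    rw [this, Finset.card_sdiff_of_subset (Finset.subset_univ S), Finset.card_univ, Fintype.card_fin]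

end Aux


section Cells

variable {N : ℕ} {T p α β R : ℝ}

def cellS (N : ℕ) (T' : ℝ≥0∞) (S : Finset (Fin N)) : Fin N → Set ℝ≥0∞ :=
  fun n => if n ∈ S then Set.Iio T' else Set.Ici T'

lemma cellS_meas (T' : ℝ≥0∞) (S : Finset (Fin N)) (n : Fin N) : MeasurableSet (cellS N T' S n) := by
  unfold cellS
  by_cases h : n ∈ S <;> simp only [h, if_true, if_false]
  · exact measurableSet_Iio
  · exact measurableSet_Ici

lemma cell_meas (T' : ℝ≥0∞) (S : Finset (Fin N)) :
    MeasurableSet (Set.pi Set.univ (cellS N T' S)) :=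
  MeasurableSet.pi countable_univ fun n _ => cellS_meas T' S n

lemma mem_cell_iff (T' : ℝ≥0∞) (S : Finset (Fin N)) (τ : Fin N → ℝ≥0∞) :
    τ ∈ Set.pi Set.univ (cellS N T' S) ↔ ∀ n, (τ n < T' ↔ n ∈ S) := by
  rw [Set.mem_univ_pi]
  apply forall_congr'
  intro n
  unfold cellS
  by_cases h : n ∈ S <;> simp [h, not_lt]

lemma cell_cover (T' : ℝ≥0∞) :
    (⋃ S : Finset (Fin N), Set.pi Set.univ (cellS N T' S)) = Set.univ := by
  rw [Set.eq_univ_iff_forall]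
  intro τ
  refine Set.mem_iUnion.2 ⟨Finset.univ.filter (fun n => τ n < T'), (mem_cell_iff _ _ τ).2 ?_⟩
  intro n; simp

lemma cell_disj (T' : ℝ≥0∞) :
    Pairwise (Function.onFun Disjoint (fun S : Finset (Fin N) => Set.pi Set.univ (cellS N T' S))) := by
  intro S S' hne
  rw [Function.onFun, Set.disjoint_left]
  intro τ hτ hτ'
  apply hne
  exact Finset.ext fun n => ((mem_cell_iff T' S τ).1 hτ n).symm.trans ((mem_cell_iff T' S' τ).1 hτ' n)

lemma lossTm_cell (S : Finset (Fin N)) (τ : Fin N → ℝ≥0∞)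
    (hτ : τ ∈ Set.pi Set.univ (cellS N (ENNReal.ofReal T) S)) :
    lossTm N T τ = (S.card : ℝ) / N := by
  unfold lossTm
  have hfe : (Finset.univ.filter fun n => τ n < ENNReal.ofReal T) = S := by
    ext n
    simp only [Finset.mem_filter, Finset.mem_univ, true_and]
    exact (mem_cell_iff _ S τ).1 hτ n
  rw [hfe]

end Cells

theorem stmt5 (μ : Measure ℝ≥0∞) [IsProbabilityMeasure μ] (T R p α β : ℝ)
    (hT : 0 < T) (hR : 0 ≤ R)
    (hpμ : μ (Set.Iio (ENNReal.ofReal T)) = ENNReal.ofReal p)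
    (hp0 : 0 < p) (hp1 : p < 1)
    (hα0 : 0 < α) (hαβ : α < β) (hβ1 : β ≤ 1) (hα1 : α < 1) (N : ℕ) :
    ∫ τ, Pprot N T R α β τ ∂(Measure.pi fun _ : Fin N => μ)
      = Real.exp (-(N * hbar α p)) *
        ∫ τ, (if 0 < (N : ℝ) * (lossTm N T τ - α) then
            Pprot N T R α β τ *
              Real.exp (-(Real.log ((α * (1 - p)) / ((1 - α) * p)) *
                ((N : ℝ) * (lossTm N T τ - α))))
          else 0) ∂(Measure.pi fun _ : Fin N => tiltedMu μ T α p) := by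
  classical
  set κ := Real.log ((α * (1 - p)) / ((1 - α) * p)) with hκdef
  set P : Measure (Fin N → ℝ≥0∞) := Measure.pi fun _ : Fin N => μ with hPdef
  set Q : Measure (Fin N → ℝ≥0∞) := Measure.pi fun _ : Fin N => tiltedMu μ T α p with hQdef
  set g : (Fin N → ℝ≥0∞) → ℝ := fun τ =>
    if 0 < (N : ℝ) * (lossTm N T τ - α) then
        Pprot N T R α β τ *
          Real.exp (-(κ * ((N : ℝ) * (lossTm N T τ - α))))
      else 0 with hgdef
  have hPint : Integrable (fun τ => Pprot N T R α β τ) P := integrable_pprot hT hR hαβ P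
  have hgmeas : Measurable g := by
    rw [hgdef]
    refine Measurable.ite ?_ ?_ measurable_const
    · exact measurableSet_lt measurable_const
        (measurable_const.mul (measurable_lossTm.sub measurable_const))
    · exact (measurable_pprot hT hαβ).mul
        (Real.measurable_exp.comp
          ((measurable_const.mul (measurable_const.mul
            (measurable_lossTm.sub measurable_const))).neg))
  have hgbound : ∀ τ, ‖g τ‖ ≤ (1 + R * T) * Real.exp (|κ| * N) := by
    intro τ
    rw [hgdef]
    by_cases hc : 0 < (N : ℝ) * (lossTm N T τ - α)
    · simp only [hc, if_true]
      rw [Real.norm_eq_abs, abs_mul, abs_of_nonneg (Real.exp_pos _).le]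
      have hl0 := lossTm_nonneg N T τ
      have hl1 := lossTm_le_one N T τ
      have habs : |lossTm N T τ - α| ≤ 1 := by
        rw [abs_le]; constructor <;> nlinarith
      have hexp : Real.exp (-(κ * ((N : ℝ) * (lossTm N T τ - α))))
          ≤ Real.exp (|κ| * N) := by
        apply Real.exp_le_exp.2
        calc -(κ * ((N : ℝ) * (lossTm N T τ - α)))
            ≤ |κ * ((N : ℝ) * (lossTm N T τ - α))| := neg_le_abs _
        _ = |κ| * ((N : ℝ) * |lossTm N T τ - α|) := by
            rw [abs_mul, abs_mul, abs_of_nonneg (Nat.cast_nonneg N : (0:ℝ) ≤ N)]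
        _ ≤ |κ| * ((N : ℝ) * 1) := by
            apply mul_le_mul_of_nonneg_left ?_ (abs_nonneg κ)
            exact mul_le_mul_of_nonneg_left habs (Nat.cast_nonneg N)
        _ = |κ| * N := by ring
      have h1 : (0:ℝ) ≤ 1 + R * T := by nlinarith
      have h2 := abs_pprot_le hT hR hαβ τ
      have h3 : (0:ℝ) ≤ |Pprot N T R α β τ| := abs_nonneg _
      nlinarith [Real.exp_pos (-(κ * ((N : ℝ) * (lossTm N T τ - α)))),
        Real.exp_pos (|κ| * N)]
    · simp only [hc, if_false]
      rw [norm_zero]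
      positivity
  have hgint : Integrable g Q :=
    Integrable.mono' (integrable_const ((1 + R * T) * Real.exp (|κ| * N)))
      hgmeas.aestronglyMeasurable (ae_of_all _ hgbound)
  have hsum : ∀ (m : Measure (Fin N → ℝ≥0∞)) (f : (Fin N → ℝ≥0∞) → ℝ),
      IsFiniteMeasure m → Integrable f m →
      ∫ τ, f τ ∂m = ∑ S : Finset (Fin N),
        ∫ τ in Set.pi Set.univ (cellS N (ENNReal.ofReal T) S), f τ ∂m := by
    intro m f _ hf
    rw [← setIntegral_univ (μ := m) (f := f), ← cell_cover (ENNReal.ofReal T),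
      integral_iUnion_fintype (fun S => cell_meas _ S) (cell_disj _)
        (fun S => hf.integrableOn)]
  have hperS : ∀ S : Finset (Fin N),
      ∫ τ in Set.pi Set.univ (cellS N (ENNReal.ofReal T) S), Pprot N T R α β τ ∂P
        = Real.exp (-(N * hbar α p)) *
          ∫ τ in Set.pi Set.univ (cellS N (ENNReal.ofReal T) S), g τ ∂Q := by
    intro S
    have hk : S.card ≤ N := by simpa using Finset.card_le_univ S
    by_cases hc : 0 < (N : ℝ) * ((S.card : ℝ) / N - α)
    · -- the nontrivial cell
      have hNne : (N : ℝ) ≠ 0 := by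
        intro h0
        rw [h0, zero_mul] at hc
        exact lt_irrefl _ hc
      have hNkα : (N : ℝ) * ((S.card : ℝ) / N - α) = (S.card : ℝ) - N * α := by
        field_simp
      -- rewrite g on the cell
      have hcong : ∫ τ in Set.pi Set.univ (cellS N (ENNReal.ofReal T) S), g τ ∂Q
          = ∫ τ in Set.pi Set.univ (cellS N (ENNReal.ofReal T) S),
              Pprot N T R α β τ * Real.exp (-(κ * ((S.card : ℝ) - N * α))) ∂Q := by
        refine setIntegral_congr_fun (cell_meas _ S) fun τ hτ => ?_
        rw [hgdef]
        simp only [lossTm_cell S τ hτ, hNkα]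
        rw [if_pos (hNkα ▸ hc)]
      rw [hcong]
      -- change of measure on the cell
      have hQr : Q.restrict (Set.pi Set.univ (cellS N (ENNReal.ofReal T) S))
          = Measure.pi (fun n => (tiltedMu μ T α p).restrict (cellS N (ENNReal.ofReal T) S n)) :=
        pi_restrict _ _ (cellS_meas _ S)
      have hPr : P.restrict (Set.pi Set.univ (cellS N (ENNReal.ofReal T) S))
          = Measure.pi (fun n => μ.restrict (cellS N (ENNReal.ofReal T) S n)) :=
        pi_restrict _ _ (cellS_meas _ S)
      have hsmul : Measure.pi (fun n => (tiltedMu μ T α p).restrict (cellS N (ENNReal.ofReal T) S n))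
          = (∏ n : Fin N, if n ∈ S then ENNReal.ofReal (α / p)
              else ENNReal.ofReal ((1 - α) / (1 - p))) •
            Measure.pi (fun n => μ.restrict (cellS N (ENNReal.ofReal T) S n)) := by
        have := pi_smul_cell (N := N) μ T α p S
        exact this
      have htoReal : (∏ n : Fin N, if n ∈ S then ENNReal.ofReal (α / p)
            else ENNReal.ofReal ((1 - α) / (1 - p))).toReal
          = (α / p) ^ S.card * ((1 - α) / (1 - p)) ^ (N - S.card) := by
        rw [prod_ite_mem_card, ENNReal.toReal_mul, ENNReal.toReal_pow, ENNReal.toReal_pow,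
          ENNReal.toReal_ofReal (div_nonneg hα0.le hp0.le),
          ENNReal.toReal_ofReal (div_nonneg (by linarith) (by linarith))]
      rw [show (∫ τ in Set.pi Set.univ (cellS N (ENNReal.ofReal T) S),
            Pprot N T R α β τ * Real.exp (-(κ * ((S.card : ℝ) - N * α))) ∂Q)
          = ∫ τ, Pprot N T R α β τ * Real.exp (-(κ * ((S.card : ℝ) - N * α)))
              ∂(Q.restrict (Set.pi Set.univ (cellS N (ENNReal.ofReal T) S))) from rfl,
        hQr, hsmul, integral_smul_measure, htoReal, ← hPr]
      rw [integral_mul_const, smul_eq_mul]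
      have hkey := key_exp (N := N) hp0 hp1 hα0 hα1 hk
      set X := ∫ τ in Set.pi Set.univ (cellS N (ENNReal.ofReal T) S), Pprot N T R α β τ ∂P
      rw [hκdef]
      linear_combination (-X) * hkey
    · -- trivial cell: both sides vanish
      have hPz : ∫ τ in Set.pi Set.univ (cellS N (ENNReal.ofReal T) S),
          Pprot N T R α β τ ∂P = 0 := by
        rw [setIntegral_congr_fun (cell_meas _ S) (g := fun _ => (0:ℝ)) fun τ hτ => ?_]
        · simp
        · apply Pprot_eq_zero hT hαβ
          rw [lossTm_cell S τ hτ]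
          rcases Nat.eq_zero_or_pos N with h0 | h0
          · have : S.card = 0 := le_antisymm (h0 ▸ hk) (Nat.zero_le _)
            rw [this, h0]
            simpa using hα0.le
          · have hN : (0:ℝ) < N := by exact_mod_cast h0
            push_neg at hc
            nlinarith
      have hgz : ∫ τ in Set.pi Set.univ (cellS N (ENNReal.ofReal T) S), g τ ∂Q = 0 := by
        rw [setIntegral_congr_fun (cell_meas _ S) (g := fun _ => (0:ℝ)) fun τ hτ => ?_]
        · simp
        · rw [hgdef]
          simp only [lossTm_cell S τ hτ, hc, if_false]
      rw [hPz, hgz, mul_zero]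
  calc ∫ τ, Pprot N T R α β τ ∂P
      = ∑ S : Finset (Fin N), ∫ τ in Set.pi Set.univ (cellS N (ENNReal.ofReal T) S),
          Pprot N T R α β τ ∂P := hsum P _ inferInstance hPint
  _ = ∑ S : Finset (Fin N), Real.exp (-(N * hbar α p)) *
        ∫ τ in Set.pi Set.univ (cellS N (ENNReal.ofReal T) S), g τ ∂Q :=
      Finset.sum_congr rfl fun S _ => hperS S
  _ = Real.exp (-(N * hbar α p)) * ∑ S : Finset (Fin N),
        ∫ τ in Set.pi Set.univ (cellS N (ENNReal.ofReal T) S), g τ ∂Q := by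
      rw [Finset.mul_sum]
  _ = Real.exp (-(N * hbar α p)) * ∫ τ, g τ ∂Q := by
      rw [← hsum Q g inferInstance hgint]


end
end

section
/- Let α ∈ (0,1). Then lim_{N→∞} sup{ | √(2π N α(1−α)) · C(N,n) · α^n · (1−α)^{N−n} − 1 | : n ∈ ℕ, n ≤ N, Nα ≤ n ≤ Nα + N^{1/4} } = 0, where C(N,n) is the binomial coefficient. (Equivalently: if γ_N = ∑_{k=1}^N X_k − Nα for i.i.d. Bernoulli(α) random variables X_k, then P(γ_N = s) = (1 + ε(s,N))/√(2π N α(1−α)) with sup over s ∈ {n − Nα : n ∈ ℤ, 0 ≤ n − Nα ≤ N^{1/4}, n ≤ N} of |ε(s,N)| tending to 0 as N → ∞.) -/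
open MeasureTheory Filter Set
open scoped ENNReal NNReal Classical

open Real Stirling

noncomputable section

set_option maxHeartbeats 1000000


lemma my_stirling_pos (k : ℕ) (hk : k ≠ 0) : 0 < stirlingSeq k := by
  obtain ⟨j, rfl⟩ := Nat.exists_eq_succ_of_ne_zero hk
  exact stirlingSeq'_pos j

lemma my_fact_eq (k : ℕ) (hk : k ≠ 0) :
    (k.factorial : ℝ) = stirlingSeq k * (Real.sqrt (2*k) * ((k : ℝ)/Real.exp 1)^k) := by
  have h0 : (0:ℝ) < k := by exact_mod_cast Nat.pos_of_ne_zero hk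
  rw [stirlingSeq, div_mul_cancel₀]
  positivity

lemma my_ident (α : ℝ) (hα0 : 0 < α) (hα1 : α < 1) (n m : ℕ) (hn : n ≠ 0) (hm : m ≠ 0) :
    Real.sqrt (2 * π * ((n+m : ℕ) : ℝ) * α * (1 - α)) * (((n+m).choose n : ℕ) : ℝ) *
      α ^ n * (1 - α) ^ m
    = (Real.sqrt π * stirlingSeq (n+m) / (stirlingSeq n * stirlingSeq m))
      * Real.sqrt (((n:ℝ)+m)^2 * (α*(1-α)) / ((n:ℝ) * m))
      * ((((n:ℝ)+m)*α/(n:ℝ))^n * (((n:ℝ)+m)*(1-α)/(m:ℝ))^m) := by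
  have hn0 : (0:ℝ) < n := by exact_mod_cast Nat.pos_of_ne_zero hn
  have hm0 : (0:ℝ) < m := by exact_mod_cast Nat.pos_of_ne_zero hm
  have hN0 : (0:ℝ) < (n:ℝ)+m := by linarith
  have hc' : (0:ℝ) < 1 - α := by linarith
  have key := Nat.choose_mul_factorial_mul_factorial (Nat.le_add_right n m)
  rw [Nat.add_sub_cancel_left] at key
  have keyR : (((n+m).choose n : ℕ) : ℝ) * ((n.factorial:ℝ) * (m.factorial:ℝ)) = ((n+m).factorial : ℝ) := by
    rw [← mul_assoc]; exact_mod_cast congrArg (Nat.cast : ℕ → ℝ) key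
  have hcc : (((n+m).choose n : ℕ) : ℝ) = ((n+m).factorial : ℝ) / ((n.factorial:ℝ) * (m.factorial:ℝ)) := by
    have hf1 : (0:ℝ) < (n.factorial:ℝ) := by exact_mod_cast n.factorial_pos
    have hf2 : (0:ℝ) < (m.factorial:ℝ) := by exact_mod_cast m.factorial_pos
    field_simp [keyR]
    rw [← keyR]; ring
  rw [hcc, my_fact_eq _ (by positivity), my_fact_eq _ hn, my_fact_eq _ hm]
  push_cast
  have e0 := Real.exp_pos 1
  have hsn := my_stirling_pos n hn
  have hsm := my_stirling_pos m hm
  have hsN := my_stirling_pos (n+m) (by positivity)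
  have hsN' : 0 < stirlingSeq (n+m) := hsN
  have S1 : Real.sqrt (2*π*((n:ℝ)+m)*α*(1-α)) * Real.sqrt (2*((n:ℝ)+m))
      = Real.sqrt π * Real.sqrt (((n:ℝ)+m)^2*(α*(1-α))/((n:ℝ)*m)) * (Real.sqrt (2*(n:ℝ)) * Real.sqrt (2*(m:ℝ))) := by
    rw [← Real.sqrt_mul (by positivity) , ← Real.sqrt_mul (by positivity),
        ← Real.sqrt_mul (by positivity), ← Real.sqrt_mul (by positivity)]
    rw [show (2*π*((n:ℝ)+m)*α*(1-α)) * (2*((n:ℝ)+m)) = π * ((((n:ℝ)+m)^2*(α*(1-α))/((n:ℝ)*m)) * ((2*(n:ℝ))*(2*(m:ℝ)))) from by field_simp]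
    ring_nf
  have S2 : (((n:ℝ)+m)/Real.exp 1)^(n+m) * (α^n * (1-α)^m)
      = ((((n:ℝ)+m)*α/(n:ℝ))^n * (((n:ℝ)+m)*(1-α)/(m:ℝ))^m) * (((n:ℝ)/Real.exp 1)^n * ((m:ℝ)/Real.exp 1)^m) := by
    have h1 : ((((n:ℝ)+m)*α/(n:ℝ))^n) * (((n:ℝ)/Real.exp 1)^n) = (((n:ℝ)+m)/Real.exp 1)^n * α^n := by
      rw [← mul_pow, ← mul_pow]
      congr 1
      field_simp
    have h2 : ((((n:ℝ)+m)*(1-α)/(m:ℝ))^m) * (((m:ℝ)/Real.exp 1)^m) = (((n:ℝ)+m)/Real.exp 1)^m * (1-α)^m := by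
      rw [← mul_pow, ← mul_pow]
      congr 1
      field_simp
    rw [pow_add]
    calc (((n:ℝ)+m)/Real.exp 1)^n * (((n:ℝ)+m)/Real.exp 1)^m * (α^n*(1-α)^m)
        = ((((n:ℝ)+m)/Real.exp 1)^n * α^n) * ((((n:ℝ)+m)/Real.exp 1)^m * (1-α)^m) := by ring
      _ = _ := by rw [← h1, ← h2]; ring
  push_cast at S1
  have hr2 : (0:ℝ) < Real.sqrt (2*(n:ℝ)) := Real.sqrt_pos.2 (by positivity)
  have hr3 : (0:ℝ) < Real.sqrt (2*(m:ℝ)) := Real.sqrt_pos.2 (by positivity)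
  have hp2 : (0:ℝ) < ((n:ℝ)/Real.exp 1)^n := by positivity
  have hp3 : (0:ℝ) < ((m:ℝ)/Real.exp 1)^m := by positivity
  field_simp
  rw [show ((n:ℝ)+m)^2*α*(1-α)/((n:ℝ)*m) = ((n:ℝ)+m)^2*(α*(1-α))/((n:ℝ)*m) from by ring]
  linear_combination (((n:ℝ)+m)/Real.exp 1)^(n+m) * (α^n*(1-α)^m) * S1
    + Real.sqrt π * Real.sqrt (((n:ℝ)+m)^2*(α*(1-α))/((n:ℝ)*m)) * (Real.sqrt (2*(n:ℝ)) * Real.sqrt (2*(m:ℝ))) * S2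



lemma my_abs2 {a b u v : ℝ} (ha : |a-1| ≤ u) (hb : |b-1| ≤ v) : |a*b-1| ≤ u + v + u*v := by
  have h : a*b-1 = (a-1)*(b-1)+(a-1)+(b-1) := by ring
  rw [h]
  have h1 := abs_add_le ((a-1)*(b-1)+(a-1)) (b-1)
  have h2 := abs_add_le ((a-1)*(b-1)) (a-1)
  have h3 : |(a-1)*(b-1)| ≤ u*v := by
    rw [abs_mul]
    exact mul_le_mul ha hb (abs_nonneg _) ((abs_nonneg _).trans ha)
  linarith

lemma my_abs3 {x y z η : ℝ} (hη : η ≤ 1) (hx : |x-1| ≤ η) (hy : |y-1| ≤ η)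
    (hz : |z-1| ≤ η) : |x*y*z - 1| ≤ 7*η := by
  have hη0 : 0 ≤ η := (abs_nonneg _).trans hx
  have h1 : |x*y-1| ≤ η + η + η*η := my_abs2 hx hy
  have h2 : |x*y*z-1| ≤ (η+η+η*η) + η + (η+η+η*η)*η := my_abs2 h1 hz
  nlinarith




lemma my_stirling_ge (k : ℕ) (hk : k ≠ 0) : Real.sqrt π ≤ stirlingSeq k := by
  obtain ⟨j, rfl⟩ := Nat.exists_eq_succ_of_ne_zero hk
  exact stirlingSeq'_antitone.le_of_tendsto
    (tendsto_stirlingSeq_sqrt_pi.comp (tendsto_add_atTop_nat 1)) j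

lemma my_sqrt_tendsto : Tendsto (fun N : ℕ => Real.sqrt N) atTop atTop := by
  rw [tendsto_atTop_atTop]
  intro b
  obtain ⟨i, hi⟩ := exists_nat_ge (b^2)
  refine ⟨i, fun a ha => ?_⟩
  have h : (b^2:ℝ) ≤ a := le_trans hi (by exact_mod_cast ha)
  calc b ≤ |b| := le_abs_self b
    _ = Real.sqrt (b^2) := (Real.sqrt_sq_eq_abs b).symm
    _ ≤ Real.sqrt a := Real.sqrt_le_sqrt h


lemma my_fact1 {p sN sn sm η : ℝ} (hp : 0 < p) (hη0 : 0 < η) (hη1 : η ≤ 1/7)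
    (h1 : p ≤ sn) (h2 : sn ≤ p + η*p/2) (h3 : p ≤ sm) (h4 : sm ≤ p + η*p/2)
    (h5 : p ≤ sN) (h6 : sN ≤ p + η*p/2) : |p*sN/(sn*sm) - 1| ≤ η := by
  have hsn0 : 0 < sn := hp.trans_le h1
  have hsm0 : 0 < sm := hp.trans_le h3
  have hd0 : 0 < sn*sm := mul_pos hsn0 hsm0
  have hpp : p*p ≤ p*sN := mul_le_mul_of_nonneg_left h5 hp.le
  have hss : sn*sm ≤ (p + η*p/2)*(p + η*p/2) :=
    mul_le_mul h2 h4 hsm0.le (by nlinarith)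
  have hss2 : p*p ≤ sn*sm := mul_le_mul h1 h3 hp.le hsn0.le
  have hup : p*sN ≤ p*(p + η*p/2) := mul_le_mul_of_nonneg_left h6 hp.le
  rw [abs_le]
  constructor
  · rw [neg_le, neg_sub, sub_le_iff_le_add, ← sub_le_iff_le_add', le_div_iff₀ hd0]
    nlinarith [mul_le_mul_of_nonneg_left hss (by linarith : (0:ℝ) ≤ 1-η),
      mul_nonneg (mul_nonneg hη0.le hη0.le) (mul_pos hp hp).le,
      mul_nonneg (mul_nonneg (mul_nonneg hη0.le hη0.le) hη0.le) (mul_pos hp hp).le]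
  · rw [sub_le_iff_le_add, div_le_iff₀ hd0]
    nlinarith [mul_nonneg hη0.le (mul_pos hp hp).le]

lemma my_D_ub {a b nR mR η : ℝ} (ha : 0 < a) (hb : 0 < b) (hη0 : 0 < η) (hη1 : η ≤ 1/7)
    (h1 : a ≤ nR) (h2 : b*(1-η) ≤ mR) : a*b ≤ (1+η)^2*(nR*mR) := by
  have hprod : a*(b*(1-η)) ≤ nR*mR :=
    mul_le_mul h1 h2 (by nlinarith) (ha.trans_le h1).le
  nlinarith [mul_le_mul_of_nonneg_left hprod (by positivity : (0:ℝ) ≤ (1+η)^2),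
    mul_pos ha hb, mul_nonneg hη0.le (mul_pos ha hb).le,
    mul_nonneg (mul_nonneg hη0.le hη0.le) (mul_pos ha hb).le,
    mul_nonneg (mul_nonneg (mul_nonneg hη0.le hη0.le) hη0.le) (mul_pos ha hb).le]

lemma my_D_lb {a b nR mR η : ℝ} (ha : 0 < a) (hb : 0 < b) (hη0 : 0 < η) (hη1 : η ≤ 1/7)
    (hn : 0 < nR) (hm : 0 < mR) (h1 : nR ≤ a*(1+η)) (h2 : mR ≤ b) :
    (1-η)^2*(nR*mR) ≤ a*b := by
  have hprod : nR*mR ≤ (a*(1+η))*b := mul_le_mul h1 h2 hm.le (by nlinarith)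
  nlinarith [mul_pos hn hm, mul_pos ha hb,
    mul_nonneg (mul_nonneg hη0.le hη0.le) (mul_pos hn hm).le,
    mul_nonneg (mul_nonneg (mul_nonneg hη0.le hη0.le) hη0.le) (mul_pos ha hb).le,
    mul_le_mul_of_nonneg_left hprod (by nlinarith : (0:ℝ) ≤ (1-η)^2)]

lemma my_delta {t s NR a η : ℝ} (hN : 0 < NR) (hs : s*s = NR) (ht2 : t^2 ≤ s)
    (hE : 1 ≤ η*a*s) (ha : 0 < a) (hη0 : 0 < η) :
    t^2*NR ≤ η*a*(NR*NR) := by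
  have hs0 : 0 < s := by nlinarith
  have k1 : t^2*NR ≤ s*NR := mul_le_mul_of_nonneg_right ht2 hN.le
  have k2 : (1:ℝ)*(s*NR) ≤ (η*a*s)*(s*NR) :=
    mul_le_mul_of_nonneg_right hE (by positivity)
  have k3 : (η*a*s)*(s*NR) = η*a*(NR*NR) := by linear_combination (η*a*NR)*hs
  nlinarith [k1, k2, k3]

lemma my_core (α : ℝ) (hα0 : 0 < α) (hα1 : α < 1) (ε : ℝ) (hε : 0 < ε) (hε1 : ε ≤ 1) :
    ∀ᶠ N : ℕ in atTop, ∀ n : ℕ, n ≤ N → (N:ℝ)*α ≤ (n:ℝ) →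
      (n:ℝ) ≤ (N:ℝ)*α + (N:ℝ)^((1:ℝ)/4) →
      |Real.sqrt (2 * Real.pi * N * α * (1 - α)) * (N.choose n : ℝ) *
          α ^ n * (1 - α) ^ (N - n) - 1| ≤ ε := by

  have hc0 : (0:ℝ) < 1 - α := by linarith
  set η := ε/7 with hη_def
  have hη0 : 0 < η := by positivity
  have hη1 : η ≤ 1/7 := by rw [hη_def]; linarith
  have hsπ : (0:ℝ) < Real.sqrt π := Real.sqrt_pos.2 Real.pi_pos
  have hππ : Real.sqrt π * Real.sqrt π = π := Real.mul_self_sqrt Real.pi_pos.le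
  set θ := η * Real.sqrt π / 2 with hθ_def
  have hθ0 : 0 < θ := by positivity
  -- Stirling uniform bound
  have hstl := tendsto_stirlingSeq_sqrt_pi
  rw [Metric.tendsto_atTop] at hstl
  obtain ⟨K, hK⟩ := hstl θ hθ0
  have hKs : ∀ k : ℕ, K ≤ k → k ≠ 0 →
      Real.sqrt π ≤ stirlingSeq k ∧ stirlingSeq k ≤ Real.sqrt π + θ := by
    intro k hk hk0
    refine ⟨my_stirling_ge k hk0, ?_⟩
    have := hK k hk
    rw [Real.dist_eq, abs_lt] at this
    linarith [this.2]
  have hcast : Tendsto (fun N : ℕ => (N:ℝ)) atTop atTop := tendsto_natCast_atTop_atTop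
  have evA : ∀ᶠ N : ℕ in atTop, (K:ℝ) ≤ (N:ℝ)*α :=
    (hcast.atTop_mul_const hα0).eventually_ge_atTop (K:ℝ)
  have evB : ∀ᶠ N : ℕ in atTop, (K:ℝ) ≤ (N:ℝ)*((1-α)/2) :=
    (hcast.atTop_mul_const (by linarith : (0:ℝ) < (1-α)/2)).eventually_ge_atTop (K:ℝ)
  have h34 : Tendsto (fun N : ℕ => ((N:ℝ))^(-(3/4 : ℝ))) atTop (nhds 0) :=
    (tendsto_rpow_neg_atTop (by norm_num)).comp hcast
  have evC : ∀ᶠ N : ℕ in atTop, ((N:ℝ))^(-(3/4:ℝ)) ≤ min η (1/2) * α :=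
    (h34.eventually_lt_const (by positivity)).mono (fun N h => h.le)
  have evD : ∀ᶠ N : ℕ in atTop, ((N:ℝ))^(-(3/4:ℝ)) ≤ min η (1/2) * (1-α) :=
    (h34.eventually_lt_const (by positivity)).mono (fun N h => h.le)
  have evE : ∀ᶠ N : ℕ in atTop, 1 ≤ η*(α*(1-α)) * Real.sqrt N :=
    ((my_sqrt_tendsto.const_mul_atTop (by positivity : 0 < η*(α*(1-α)))).eventually_ge_atTop 1)
  have evF : ∀ᶠ N : ℕ in atTop, 1 ≤ N := eventually_ge_atTop 1
  filter_upwards [evA, evB, evC, evD, evE, evF] with N hA hB hC hD hE hF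
  intro n hnN hlow hup
  -- basic positivity
  have hN0 : (0:ℝ) < N := by exact_mod_cast hF
  have hNα : (0:ℝ) < (N:ℝ)*α := by positivity
  have hNc : (0:ℝ) < (N:ℝ)*(1-α) := by positivity
  -- the rpow bound in usable form
  have hr0 : (0:ℝ) ≤ (N:ℝ)^((1:ℝ)/4) := Real.rpow_nonneg hN0.le _
  have hr_eq : (N:ℝ)^((1:ℝ)/4) = (N:ℝ)^(-(3/4:ℝ)) * N := by
    calc (N:ℝ)^((1:ℝ)/4) = (N:ℝ)^(-(3/4:ℝ)+1) := by norm_num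
      _ = (N:ℝ)^(-(3/4:ℝ)) * (N:ℝ)^(1:ℝ) := Real.rpow_add hN0 _ _
      _ = (N:ℝ)^(-(3/4:ℝ)) * N := by rw [Real.rpow_one]
  have hrC : (N:ℝ)^((1:ℝ)/4) ≤ min η (1/2) * ((N:ℝ)*α) := by
    rw [hr_eq]
    calc (N:ℝ)^(-(3/4:ℝ)) * N ≤ (min η (1/2) * α) * N :=
          mul_le_mul_of_nonneg_right hC hN0.le
      _ = min η (1/2) * ((N:ℝ)*α) := by ring
  have hrD : (N:ℝ)^((1:ℝ)/4) ≤ min η (1/2) * ((N:ℝ)*(1-α)) := by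
    rw [hr_eq]
    calc (N:ℝ)^(-(3/4:ℝ)) * N ≤ (min η (1/2) * (1-α)) * N :=
          mul_le_mul_of_nonneg_right hD hN0.le
      _ = min η (1/2) * ((N:ℝ)*(1-α)) := by ring
  have hmin_le_η : min η (1/2) ≤ η := min_le_left _ _
  have hmin_le_half : min η (1/2) ≤ 1/2 := min_le_right _ _
  have hmin0 : 0 ≤ min η (1/2) := le_min hη0.le (by norm_num)
  -- n, m positivity
  have hn0R : (0:ℝ) < n := lt_of_lt_of_le hNα hlow
  have hn0 : n ≠ 0 := Nat.cast_ne_zero.mp hn0R.ne'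
  set m := N - n with hm_def
  have hnm : n + m = N := Nat.add_sub_cancel' hnN
  have hmR : (m:ℝ) = (N:ℝ) - n := by
    have : ((n+m:ℕ):ℝ) = (N:ℝ) := by rw [hnm]
    push_cast at this
    linarith
  have hm_lb : (N:ℝ)*((1-α)/2) ≤ (m:ℝ) := by
    rw [hmR]
    have h1 : (N:ℝ)^((1:ℝ)/4) ≤ (1/2) * ((N:ℝ)*(1-α)) :=
      hrD.trans (mul_le_mul_of_nonneg_right hmin_le_half hNc.le)
    linarith
  have hm0R : (0:ℝ) < m := lt_of_lt_of_le (by positivity) hm_lb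
  have hm0 : m ≠ 0 := Nat.cast_ne_zero.mp hm0R.ne'
  -- t
  set t := (n:ℝ) - (N:ℝ)*α with ht_def
  have ht0 : 0 ≤ t := by rw [ht_def]; linarith
  have ht_le : t ≤ (N:ℝ)^((1:ℝ)/4) := by rw [ht_def]; linarith
  have hm_eq : (m:ℝ) = (N:ℝ)*(1-α) - t := by rw [hmR, ht_def]; ring
  have hsqN : Real.sqrt N * Real.sqrt N = N := Real.mul_self_sqrt hN0.le
  have ht2 : t^2 ≤ Real.sqrt N := by
    have h1 : t^2 ≤ ((N:ℝ)^((1:ℝ)/4))^2 := pow_le_pow_left₀ ht0 ht_le 2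
    have h2 : ((N:ℝ)^((1:ℝ)/4))^2 = Real.sqrt N := by
      rw [← Real.rpow_natCast ((N:ℝ)^((1:ℝ)/4)) 2, ← Real.rpow_mul hN0.le, Real.sqrt_eq_rpow]
      norm_num
    exact h2 ▸ h1
  -- rewrite the goal via the identity
  rw [show N = n + m from hnm.symm,
    my_ident α hα0 hα1 n m hn0 hm0, show n + m = N from hnm,
    show (n:ℝ) + (m:ℝ) = (N:ℝ) from by rw [hmR]; ring]
  -- Factor 1 : stirling ratio
  have hKn : K ≤ n := by
    have : (K:ℝ) ≤ (n:ℝ) := le_trans hA hlow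
    exact_mod_cast this
  have hKm : K ≤ m := by
    have : (K:ℝ) ≤ (m:ℝ) := le_trans hB hm_lb
    exact_mod_cast this
  have hKN : K ≤ N := le_trans hKn hnN
  obtain ⟨hsn1, hsn2⟩ := hKs n hKn hn0
  obtain ⟨hsm1, hsm2⟩ := hKs m hKm hm0
  obtain ⟨hsN1, hsN2⟩ := hKs N hKN (by positivity)
  rw [hθ_def] at hsn2 hsm2 hsN2
  have hx : |Real.sqrt π * stirlingSeq N / (stirlingSeq n * stirlingSeq m) - 1| ≤ η :=
    my_fact1 hsπ hη0 hη1 hsn1 hsn2 hsm1 hsm2 hsN1 hsN2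
  -- Factor 2 : sqrt ratio
  have hnmR : (0:ℝ) < (n:ℝ)*m := mul_pos hn0R hm0R
  have hn_ub : (n:ℝ) ≤ (N:ℝ)*α*(1+η) := by
    have h1 : (N:ℝ)^((1:ℝ)/4) ≤ η * ((N:ℝ)*α) :=
      hrC.trans (mul_le_mul_of_nonneg_right hmin_le_η hNα.le)
    linarith
  have hm_ub : (m:ℝ) ≤ (N:ℝ)*(1-α) := by rw [hm_eq]; linarith
  have hm_lb2 : (N:ℝ)*(1-α)*(1-η) ≤ (m:ℝ) := by
    have h1 : (N:ℝ)^((1:ℝ)/4) ≤ η * ((N:ℝ)*(1-α)) :=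
      hrD.trans (mul_le_mul_of_nonneg_right hmin_le_η hNc.le)
    rw [hm_eq]
    linarith
  have hy : |Real.sqrt ((N:ℝ)^2*(α*(1-α))/((n:ℝ)*m)) - 1| ≤ η := by
    have hD_ub : (N:ℝ)^2*(α*(1-α))/((n:ℝ)*m) ≤ (1+η)^2 := by
      rw [div_le_iff₀ hnmR]
      calc (N:ℝ)^2*(α*(1-α)) = ((N:ℝ)*α)*((N:ℝ)*(1-α)) := by ring
        _ ≤ (1+η)^2*((n:ℝ)*m) :=
            my_D_ub hNα hNc hη0 hη1 hlow (by linarith [hm_lb2])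
    have hD_lb : (1-η)^2 ≤ (N:ℝ)^2*(α*(1-α))/((n:ℝ)*m) := by
      rw [le_div_iff₀ hnmR]
      calc (1-η)^2*((n:ℝ)*m) ≤ ((N:ℝ)*α)*((N:ℝ)*(1-α)) :=
            my_D_lb hNα hNc hη0 hη1 hn0R hm0R hn_ub hm_ub
        _ = (N:ℝ)^2*(α*(1-α)) := by ring
    have h1 : Real.sqrt ((N:ℝ)^2*(α*(1-α))/((n:ℝ)*m)) ≤ 1+η := by
      calc Real.sqrt ((N:ℝ)^2*(α*(1-α))/((n:ℝ)*m)) ≤ Real.sqrt ((1+η)^2) :=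
            Real.sqrt_le_sqrt hD_ub
        _ = 1+η := Real.sqrt_sq (by linarith)
    have h2 : 1-η ≤ Real.sqrt ((N:ℝ)^2*(α*(1-α))/((n:ℝ)*m)) := by
      calc (1-η:ℝ) = Real.sqrt ((1-η)^2) := (Real.sqrt_sq (by linarith)).symm
        _ ≤ _ := Real.sqrt_le_sqrt hD_lb
    rw [abs_le]
    constructor <;> linarith
  -- Factor 3 : exponential part
  have hz : |((N:ℝ)*α/n)^n * ((N:ℝ)*(1-α)/m)^m - 1| ≤ η := by
    have hq1 : (0:ℝ) < (N:ℝ)*α/n := by positivity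
    have hq2 : (0:ℝ) < (N:ℝ)*(1-α)/m := by positivity
    have hz_eq : ((N:ℝ)*α/n)^n * ((N:ℝ)*(1-α)/m)^m
        = Real.exp ((n:ℝ) * Real.log ((N:ℝ)*α/n) + (m:ℝ) * Real.log ((N:ℝ)*(1-α)/m)) := by
      rw [Real.exp_add, Real.exp_nat_mul, Real.exp_nat_mul, Real.exp_log hq1, Real.exp_log hq2]
    -- log bounds
    have hA1 : (n:ℝ) * Real.log ((N:ℝ)*α/n) ≤ -t := by
      have h1 : Real.log ((N:ℝ)*α/n) ≤ (N:ℝ)*α/n - 1 := Real.log_le_sub_one_of_pos hq1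
      have h2 : (n:ℝ) * ((N:ℝ)*α/n - 1) = -t := by
        rw [ht_def]; field_simp; ring
      exact (mul_le_mul_of_nonneg_left h1 hn0R.le).trans_eq h2
    have hA2 : -(t + t^2/((N:ℝ)*α)) ≤ (n:ℝ) * Real.log ((N:ℝ)*α/n) := by
      have hinv : (N:ℝ)*α/n = ((n:ℝ)/((N:ℝ)*α))⁻¹ := by rw [inv_div]
      have h1 : Real.log ((n:ℝ)/((N:ℝ)*α)) ≤ (n:ℝ)/((N:ℝ)*α) - 1 :=
        Real.log_le_sub_one_of_pos (by positivity)
      have h2 : (n:ℝ) * ((n:ℝ)/((N:ℝ)*α) - 1) = t + t^2/((N:ℝ)*α) := by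
        rw [ht_def]; field_simp; ring
      rw [hinv, Real.log_inv, mul_neg]
      exact neg_le_neg ((mul_le_mul_of_nonneg_left h1 hn0R.le).trans_eq h2)
    have hB1 : (m:ℝ) * Real.log ((N:ℝ)*(1-α)/m) ≤ t := by
      have h1 : Real.log ((N:ℝ)*(1-α)/m) ≤ (N:ℝ)*(1-α)/m - 1 := Real.log_le_sub_one_of_pos hq2
      have h2 : (m:ℝ) * ((N:ℝ)*(1-α)/m - 1) = t := by
        rw [mul_sub, mul_one, mul_comm (m:ℝ), div_mul_cancel₀ _ (ne_of_gt hm0R)]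
        linarith [hm_eq]
      exact (mul_le_mul_of_nonneg_left h1 hm0R.le).trans_eq h2
    have hB2 : t - t^2/((N:ℝ)*(1-α)) ≤ (m:ℝ) * Real.log ((N:ℝ)*(1-α)/m) := by
      have hinv : (N:ℝ)*(1-α)/m = ((m:ℝ)/((N:ℝ)*(1-α)))⁻¹ := by rw [inv_div]
      have h1 : Real.log ((m:ℝ)/((N:ℝ)*(1-α))) ≤ (m:ℝ)/((N:ℝ)*(1-α)) - 1 :=
        Real.log_le_sub_one_of_pos (by positivity)
      have h2 : (m:ℝ) * ((m:ℝ)/((N:ℝ)*(1-α)) - 1) = -t + t^2/((N:ℝ)*(1-α)) := by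
        rw [hm_eq]; field_simp; ring
      rw [hinv, Real.log_inv, mul_neg]
      have := neg_le_neg ((mul_le_mul_of_nonneg_left h1 hm0R.le).trans_eq h2)
      linarith [this]
    -- the quadratic error is at most η
    have hδ : t^2/((N:ℝ)*α) + t^2/((N:ℝ)*(1-α)) ≤ η := by
      rw [div_add_div _ _ (ne_of_gt hNα) (ne_of_gt hNc), div_le_iff₀ (mul_pos hNα hNc)]
      have key : t^2*(N:ℝ) ≤ η*(α*(1-α))*((N:ℝ)*(N:ℝ)) :=
        my_delta hN0 hsqN ht2 (by linarith [hE] : 1 ≤ η*(α*(1-α))*Real.sqrt N) (by positivity) hη0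
      linarith [key]
    have hup1 : ((N:ℝ)*α/n)^n * ((N:ℝ)*(1-α)/m)^m ≤ 1 := by
      rw [hz_eq]
      calc Real.exp ((n:ℝ) * Real.log ((N:ℝ)*α/n) + (m:ℝ) * Real.log ((N:ℝ)*(1-α)/m))
          ≤ Real.exp 0 := Real.exp_le_exp.2 (by linarith)
        _ = 1 := Real.exp_zero
    have hlo1 : 1 - η ≤ ((N:ℝ)*α/n)^n * ((N:ℝ)*(1-α)/m)^m := by
      rw [hz_eq]
      have hsum : -η ≤ (n:ℝ) * Real.log ((N:ℝ)*α/n) + (m:ℝ) * Real.log ((N:ℝ)*(1-α)/m) := by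
        linarith
      calc (1:ℝ) - η = (-η) + 1 := by ring
        _ ≤ Real.exp (-η) := Real.add_one_le_exp _
        _ ≤ _ := Real.exp_le_exp.2 hsum
    rw [abs_le]
    constructor <;> linarith
  calc |Real.sqrt π * stirlingSeq N / (stirlingSeq n * stirlingSeq m)
        * Real.sqrt ((N:ℝ)^2*(α*(1-α))/((n:ℝ)*m))
        * (((N:ℝ)*α/n)^n * ((N:ℝ)*(1-α)/m)^m) - 1| ≤ 7*η :=
      my_abs3 (by linarith) hx hy hz
    _ = ε := by rw [hη_def]; ring


theorem stmt6 (α : ℝ) (hα0 : 0 < α) (hα1 : α < 1) :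
    Tendsto (fun N : ℕ =>
        sSup {x : ℝ | ∃ n : ℕ, n ≤ N ∧ (N : ℝ) * α ≤ (n : ℝ) ∧
          (n : ℝ) ≤ (N : ℝ) * α + (N : ℝ) ^ ((1 : ℝ) / 4) ∧
          x = |Real.sqrt (2 * Real.pi * N * α * (1 - α)) * (N.choose n : ℝ) *
              α ^ n * (1 - α) ^ (N - n) - 1|})
      atTop (nhds 0) := by
  rw [NormedAddCommGroup.tendsto_nhds_zero]
  intro ε hε
  have hε2 : 0 < min (ε/2) (1/2) := by positivity
  have hε2' : min (ε/2) (1/2) ≤ 1 := le_trans (min_le_right _ _) (by norm_num)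
  filter_upwards [my_core α hα0 hα1 _ hε2 hε2'] with N hN
  have h1 : sSup {x : ℝ | ∃ n : ℕ, n ≤ N ∧ (N : ℝ) * α ≤ (n : ℝ) ∧
      (n : ℝ) ≤ (N : ℝ) * α + (N : ℝ) ^ ((1 : ℝ) / 4) ∧
      x = |Real.sqrt (2 * Real.pi * N * α * (1 - α)) * (N.choose n : ℝ) *
          α ^ n * (1 - α) ^ (N - n) - 1|} ≤ min (ε/2) (1/2) := by
    apply Real.sSup_le _ hε2.le
    rintro x ⟨n, hn1, hn2, hn3, rfl⟩
    exact hN n hn1 hn2 hn3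
  have h2 : 0 ≤ sSup {x : ℝ | ∃ n : ℕ, n ≤ N ∧ (N : ℝ) * α ≤ (n : ℝ) ∧
      (n : ℝ) ≤ (N : ℝ) * α + (N : ℝ) ^ ((1 : ℝ) / 4) ∧
      x = |Real.sqrt (2 * Real.pi * N * α * (1 - α)) * (N.choose n : ℝ) *
          α ^ n * (1 - α) ^ (N - n) - 1|} := by
    apply Real.sSup_nonneg
    rintro x ⟨n, _, _, _, rfl⟩
    exact abs_nonneg _
  rw [Real.norm_eq_abs, abs_of_nonneg h2]
  calc sSup _ ≤ min (ε/2) (1/2) := h1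
    _ ≤ ε/2 := min_le_left _ _
    _ < ε := half_lt_self hε

end
end

section
/- Let κ > 0 and α ∈ (0,1). Then for every integer N ≥ 1, | ∑_{j=⌈Nα⌉}^{⌊Nα + N^{1/4}⌋} (j − Nα)·e^{−κ(j−Nα)} − e^{−κ(⌈Nα⌉−Nα)}·( e^{−κ}/(1−e^{−κ})² + (⌈Nα⌉−Nα)/(1−e^{−κ}) ) | ≤ 4e^{−1}·exp(−(κ/2)(N^{1/4}−1)) / ( κ·(1−e^{−κ})² ). -/
open MeasureTheory Filter Set
open scoped ENNReal NNReal Classical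

noncomputable section

lemma aux_poly7 {r : ℝ} (h0 : 0 < r) (h1 : r < 1) : r * (1 - r * r) ^ 2 ≤ 2 * (1 - r) := by
  nlinarith [sq_nonneg (1 - r * r), sq_nonneg (1 - r), sq_nonneg (1 + r),
    mul_pos h0 (sub_pos.mpr h1), sq_nonneg (r * (1 - r)), sq_nonneg r,
    mul_nonneg (mul_nonneg h0.le (sub_nonneg.mpr h1.le)) (sq_nonneg (1 + r))]

theorem stmt7 (κ α : ℝ) (hκ : 0 < κ) (hα0 : 0 < α) (hα1 : α < 1)
    (N : ℕ) (hN : 1 ≤ N) :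
    |(∑ j ∈ Finset.Icc ⌈(N : ℝ) * α⌉ ⌊(N : ℝ) * α + (N : ℝ) ^ ((1 : ℝ) / 4)⌋,
        ((j : ℝ) - (N : ℝ) * α) * Real.exp (-(κ * ((j : ℝ) - (N : ℝ) * α)))) -
      Real.exp (-(κ * ((⌈(N : ℝ) * α⌉ : ℝ) - (N : ℝ) * α))) *
        (Real.exp (-κ) / (1 - Real.exp (-κ)) ^ 2 +
          ((⌈(N : ℝ) * α⌉ : ℝ) - (N : ℝ) * α) / (1 - Real.exp (-κ)))|
    ≤ 4 * Real.exp (-1) * Real.exp (-(κ / 2) * ((N : ℝ) ^ ((1 : ℝ) / 4) - 1)) /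
        (κ * (1 - Real.exp (-κ)) ^ 2) := by
  set y : ℝ := (N : ℝ) * α with hy
  set P : ℝ := (N : ℝ) ^ ((1 : ℝ) / 4) with hPdef
  set c : ℤ := ⌈y⌉ with hc
  set M : ℤ := ⌊y + P⌋ with hM
  set x : ℝ := Real.exp (-κ) with hxdef
  set δ : ℝ := (c : ℝ) - y with hδ
  have hx0 : 0 < x := Real.exp_pos _
  have hx1 : x < 1 := by
    rw [hxdef, Real.exp_lt_one_iff]; linarith
  have hδ0 : 0 ≤ δ := by have := Int.le_ceil y; simp [hδ]; linarith
  have hδ1 : δ < 1 := by have := Int.ceil_lt_add_one y; simp [hδ]; linarith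
  have hP1 : (1 : ℝ) ≤ P := Real.one_le_rpow (by exact_mod_cast hN) (by norm_num)
  have hcM : c ≤ M := by
    rw [hM, Int.le_floor]
    have := Int.ceil_lt_add_one y
    push_cast
    linarith
  set m : ℕ := (M - c).toNat with hm
  have hMc : (M : ℝ) = (c : ℝ) + m := by
    have : (m : ℤ) = M - c := Int.toNat_of_nonneg (by omega)
    have := congrArg (Int.cast : ℤ → ℝ) this
    push_cast at this
    linarith
  -- m + 1 + δ ≥ P
  have hmP : P ≤ (m : ℝ) + 1 + δ := by
    have h1 : y + P - 1 < (M : ℝ) := by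
      have := Int.sub_one_lt_floor (y + P)
      push_cast at this ⊢
      linarith
    rw [hMc] at h1
    simp only [hδ]
    linarith
  -- the summable series
  have hxn : ‖x‖ < 1 := by rw [Real.norm_eq_abs, abs_of_pos hx0]; exact hx1
  set g : ℕ → ℝ := fun k => ((k : ℝ) + δ) * x ^ k with hg
  have hgeq : g = fun k : ℕ => (k : ℝ) * x ^ k + δ * x ^ k := by
    funext k; simp [hg]; ring
  have hs1 : Summable (fun k : ℕ => (k : ℝ) * x ^ k) :=
    (hasSum_coe_mul_geometric_of_norm_lt_one hxn).summable
  have hs2 : Summable (fun k : ℕ => x ^ k) := summable_geometric_of_lt_one hx0.le hx1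
  have hgs : Summable g := by rw [hgeq]; exact hs1.add (hs2.mul_left δ)
  have htsum : ∑' k, g k = x / (1 - x) ^ 2 + δ / (1 - x) := by
    rw [hgeq, hs1.tsum_add (hs2.mul_left δ), tsum_coe_mul_geometric_of_norm_lt_one hxn,
      tsum_mul_left, tsum_geometric_of_lt_one hx0.le hx1, div_eq_mul_inv, div_eq_mul_inv]
  -- reindex the finite sum
  have hre : (∑ j ∈ Finset.Icc c M, ((j : ℝ) - y) * Real.exp (-(κ * ((j : ℝ) - y))))
      = ∑ k ∈ Finset.range (m + 1), Real.exp (-(κ * δ)) * g k := by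
    refine Finset.sum_nbij' (fun j : ℤ => (j - c).toNat) (fun k : ℕ => c + k) ?_ ?_ ?_ ?_ ?_
    · intro j hj
      simp only [Finset.mem_Icc] at hj
      simp only [Finset.mem_range]
      omega
    · intro k hk
      simp only [Finset.mem_range] at hk
      simp only [Finset.mem_Icc]
      omega
    · intro j hj; simp only [Finset.mem_Icc] at hj
      show c + ((j - c).toNat : ℤ) = j; omega
    · intro k hk; simp only [Finset.mem_range] at hk
      show (c + (k : ℤ) - c).toNat = k; omega
    · intro j hj
      simp only [Finset.mem_Icc] at hj
      have hk : ((((j - c).toNat : ℕ) : ℝ)) = (j : ℝ) - c := by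
        have : ((j - c).toNat : ℤ) = j - c := Int.toNat_of_nonneg (by omega)
        have := congrArg (Int.cast : ℤ → ℝ) this
        push_cast at this
        linarith
      simp only [hg, hk]
      have h1 : (j : ℝ) - y = ((j : ℝ) - c) + δ := by rw [hδ]; ring
      have h2 : x ^ (j - c).toNat = Real.exp (-(κ * ((j:ℝ) - c))) := by
        rw [hxdef, ← Real.exp_nat_mul, hk]; ring_nf
      rw [h2, h1, show -(κ * (((j:ℝ) - c) + δ)) = -(κ * δ) + -(κ * ((j:ℝ) - c)) by ring,
        Real.exp_add]
      ring
  -- termwise exponential bound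
  have hbound : ∀ t : ℝ, t * Real.exp (-(κ * t)) ≤
      2 / κ * Real.exp (-1) * Real.exp (-(κ / 2) * t) := by
    intro t
    have h1 : κ * t / 2 ≤ Real.exp (κ * t / 2 - 1) := by
      have := Real.add_one_le_exp (κ * t / 2 - 1); linarith
    have hp := Real.exp_pos (-(κ * t / 2))
    have h2 : (κ * t / 2) * Real.exp (-(κ * t / 2)) ≤ Real.exp (-1) := by
      calc (κ * t / 2) * Real.exp (-(κ * t / 2))
          ≤ Real.exp (κ * t / 2 - 1) * Real.exp (-(κ * t / 2)) :=
            mul_le_mul_of_nonneg_right h1 hp.le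
        _ = Real.exp (-1) := by rw [← Real.exp_add]; ring_nf
    have h3 : t * Real.exp (-(κ * t)) =
        2 / κ * ((κ * t / 2) * Real.exp (-(κ * t / 2))) * Real.exp (-(κ * t / 2)) := by
      rw [show -(κ * t) = -(κ * t / 2) + -(κ * t / 2) by ring, Real.exp_add]
      field_simp
    have h4 : -(κ / 2) * t = -(κ * t / 2) := by ring
    rw [h3, h4]
    have h5 : 2 / κ * ((κ * t / 2) * Real.exp (-(κ * t / 2))) ≤ 2 / κ * Real.exp (-1) :=
      mul_le_mul_of_nonneg_left h2 (by positivity)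
    exact mul_le_mul_of_nonneg_right h5 hp.le
  set r : ℝ := Real.exp (-(κ / 2)) with hr
  have hr0 : 0 < r := Real.exp_pos _
  have hr1 : r < 1 := by rw [hr, Real.exp_lt_one_iff]; linarith
  have hrr : r * r = x := by rw [hr, hxdef, ← Real.exp_add]; ring_nf
  set E1 : ℝ := Real.exp (-(κ / 2) * (P - 1)) with hE1
  have hE10 : 0 < E1 := Real.exp_pos _
  set C : ℝ := 2 / κ * Real.exp (-1) * Real.exp (-(κ / 2) * ((m : ℝ) + 1 + δ)) with hC
  have hC0 : 0 < C := by positivity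
  -- each tail term is bounded
  have hterm : ∀ k : ℕ, Real.exp (-(κ * δ)) * g (k + (m + 1)) ≤ C * r ^ k := by
    intro k
    have eL : Real.exp (-(κ * δ)) * g (k + (m + 1)) =
        ((k : ℝ) + (m : ℝ) + 1 + δ) * Real.exp (-(κ * ((k : ℝ) + (m : ℝ) + 1 + δ))) := by
      simp only [hg]
      rw [hxdef, ← Real.exp_nat_mul,
        show -(κ * ((k : ℝ) + (m : ℝ) + 1 + δ))
            = -(κ * δ) + (((k + (m + 1) : ℕ)) : ℝ) * -κ by push_cast; ring,
        Real.exp_add]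
      push_cast
      ring
    rw [eL]
    calc ((k : ℝ) + (m : ℝ) + 1 + δ) * Real.exp (-(κ * ((k : ℝ) + (m : ℝ) + 1 + δ)))
        ≤ 2 / κ * Real.exp (-1) * Real.exp (-(κ / 2) * ((k : ℝ) + (m : ℝ) + 1 + δ)) :=
          hbound _
      _ = C * r ^ k := by
          rw [hC, hr, ← Real.exp_nat_mul,
            show -(κ / 2) * ((k : ℝ) + (m : ℝ) + 1 + δ)
                = -(κ / 2) * ((m : ℝ) + 1 + δ) + (k : ℝ) * -(κ / 2) by ring,
            Real.exp_add]
          ring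
  -- summability of the tail
  have htail_summ : Summable (fun k : ℕ => g (k + (m + 1))) :=
    (summable_nat_add_iff (m + 1)).mpr hgs
  have htail0 : 0 ≤ ∑' k, g (k + (m + 1)) := by
    apply tsum_nonneg
    intro k
    have : (0 : ℝ) ≤ ((k + (m + 1) : ℕ) : ℝ) + δ := by positivity
    exact mul_nonneg this (by positivity)
  -- the key identity
  have key : (∑ j ∈ Finset.Icc c M, ((j : ℝ) - y) * Real.exp (-(κ * ((j : ℝ) - y))))
      - Real.exp (-(κ * δ)) * (x / (1 - x) ^ 2 + δ / (1 - x))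
      = -(Real.exp (-(κ * δ)) * ∑' k, g (k + (m + 1))) := by
    rw [hre, ← Finset.mul_sum, ← htsum]
    have h := hgs.sum_add_tsum_nat_add (m + 1)
    rw [← h]
    ring
  rw [key, abs_neg, abs_of_nonneg (mul_nonneg (Real.exp_pos _).le htail0)]
  -- bound tail sum
  have hsumC : Summable (fun k : ℕ => C * r ^ k) :=
    (summable_geometric_of_lt_one hr0.le hr1).mul_left _
  have htail_le : Real.exp (-(κ * δ)) * ∑' k, g (k + (m + 1)) ≤ C / (1 - r) := by
    rw [← tsum_mul_left]
    calc (∑' k, Real.exp (-(κ * δ)) * g (k + (m + 1))) ≤ ∑' k, C * r ^ k :=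
          Summable.tsum_le_tsum hterm (htail_summ.mul_left _) hsumC
      _ = C * (1 - r)⁻¹ := by
          rw [tsum_mul_left, tsum_geometric_of_lt_one hr0.le hr1]
      _ = C / (1 - r) := by rw [div_eq_mul_inv]
  refine htail_le.trans ?_
  -- final numeric chain
  have hCle : C ≤ 2 / κ * Real.exp (-1) * (E1 * r) := by
    rw [hC, hE1, hr, ← Real.exp_add]
    have h0 : κ / 2 * P ≤ κ / 2 * ((m : ℝ) + 1 + δ) :=
      mul_le_mul_of_nonneg_left hmP (by positivity)
    have h1 : -(κ / 2) * ((m : ℝ) + 1 + δ) ≤ -(κ / 2) * (P - 1) + -(κ / 2) := by linarith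
    exact mul_le_mul_of_nonneg_left (Real.exp_le_exp.mpr h1) (by positivity)
  have h1r : 0 < 1 - r := by linarith
  have h1x : 0 < 1 - x := by linarith
  have hpoly : r * (1 - r * r) ^ 2 ≤ 2 * (1 - r) := aux_poly7 hr0 hr1
  calc C / (1 - r) ≤ (2 / κ * Real.exp (-1) * (E1 * r)) / (1 - r) := by gcongr
    _ ≤ 4 * Real.exp (-1) * E1 / (κ * (1 - x) ^ 2) := by
        rw [div_le_div_iff₀ h1r (by positivity), ← hrr]
        have hsimp : 2 / κ * Real.exp (-1) * (E1 * r) * (κ * (1 - r * r) ^ 2)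
            = 2 * Real.exp (-1) * E1 * (r * (1 - r * r) ^ 2) := by
          field_simp
        rw [hsimp]
        calc 2 * Real.exp (-1) * E1 * (r * (1 - r * r) ^ 2)
            ≤ 2 * Real.exp (-1) * E1 * (2 * (1 - r)) :=
              mul_le_mul_of_nonneg_left hpoly (by positivity)
          _ = 4 * Real.exp (-1) * E1 * (1 - r) := by ring

end
end
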